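/- arXiv:2104.14347 — 6 statements merged into one kernel-verified Lean document; each statement's English description precedes it below -/
import Mathlib

section
/- Among all divisor methods, Jefferson's method (f(t) = t+1 for all t) is the only one satisfying weighted proportionality up to one item (WPROP1): a divisor method with function f produces a WPROP1 allocation for every instance (every number of agents and items, weights, and additive utilities) if and only if f(t) = t+1 for all t ∈ ℤ≥0. -/
open Finset

/-- The favorite item of an agent with item-utility function `u` among a remaining
set `R` of items: a highest-valued item, ties broken in favor of the lower-numbered item. -/
noncomputable def favorite {m : ℕ} (u : Fin m → ℝ) (R : Finset (Fin m)) : Option (Fin m) :=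
  if h : (R.filter fun j => ∀ j' ∈ R, u j' ≤ u j).Nonempty then
    some ((R.filter fun j => ∀ j' ∈ R, u j' ≤ u j).min' h)
  else none

/-- One step of the picking process: agent `a` picks her favorite remaining item. -/
noncomputable def pickStep {n m : ℕ} (u : Fin n → Fin m → ℝ)
    (st : Finset (Fin m) × (Fin n → Finset (Fin m))) (a : Fin n) :
    Finset (Fin m) × (Fin n → Finset (Fin m)) :=
  match favorite (u a) st.1 with
  | none => st
  | some j => (st.1.erase j, Function.update st.2 a (insert j (st.2 a)))

/-- The allocation produced by letting agents pick their favorite remaining items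
in the order given by the picking sequence `π`. -/
noncomputable def allocate {n m : ℕ} (u : Fin n → Fin m → ℝ) (π : List (Fin n)) :
    Fin n → Finset (Fin m) :=
  (π.foldl (pickStep u) (Finset.univ, fun _ => ∅)).2

/-- Weighted proportionality up to one item. -/
def isWPROP1 {n m : ℕ} (w : Fin n → ℝ) (u : Fin n → Fin m → ℝ)
    (M : Fin n → Finset (Fin m)) : Prop :=
  ∀ i : Fin n, ∃ B ⊆ Finset.univ \ M i, B.card ≤ 1 ∧
    w i / (∑ i', w i') * (∑ x, u i x) - (∑ x ∈ B, u i x) ≤ ∑ x ∈ M i, u i x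

/-- A divisor method is given by a strictly increasing `f : ℕ → ℝ` with `t ≤ f t ≤ t + 1`. -/
def IsDivisorFn (f : ℕ → ℝ) : Prop :=
  StrictMono f ∧ ∀ t : ℕ, (t : ℝ) ≤ f t ∧ f t ≤ t + 1

/-- `π` is the picking sequence induced by the divisor method with function `f` and
weights `w`: each pick goes to an agent minimizing `f t_i / w_i` (where `t_i` is the
number of picks agent `i` has received so far), ties broken toward lower-numbered agents. -/
def IsDivisorSeq {n : ℕ} (f : ℕ → ℝ) (w : Fin n → ℝ) (π : List (Fin n)) : Prop :=
  ∀ (k : ℕ) (hk : k < π.length) (i : Fin n),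
    f ((π.take k).count (π.get ⟨k, hk⟩)) / w (π.get ⟨k, hk⟩) ≤
      f ((π.take k).count i) / w i ∧
    (i < π.get ⟨k, hk⟩ →
      f ((π.take k).count (π.get ⟨k, hk⟩)) / w (π.get ⟨k, hk⟩) <
        f ((π.take k).count i) / w i)

lemma foldl_take_succ {α σ : Type*} (g : σ → α → σ) (init : σ) (l : List α) (k : ℕ)
    (hk : k < l.length) :
    (l.take (k+1)).foldl g init = g ((l.take k).foldl g init) (l.get ⟨k, hk⟩) := by
  rw [List.take_succ, List.foldl_append]
  have : l[k]? = some (l.get ⟨k, hk⟩) := by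
    rw [List.getElem?_eq_getElem hk]; rfl
  rw [this]
  rfl

lemma count_take_succ {α : Type*} [DecidableEq α] (l : List α) (k : ℕ) (hk : k < l.length)
    (a : α) :
    (l.take (k+1)).count a = (l.take k).count a + if l.get ⟨k, hk⟩ = a then 1 else 0 := by
  rw [List.take_succ, List.count_append]
  have : l[k]? = some (l.get ⟨k, hk⟩) := by
    rw [List.getElem?_eq_getElem hk]; rfl
  rw [this]
  congr 1
  simp [List.count_singleton']

lemma sum_count_univ {n : ℕ} (l : List (Fin n)) :
    ∑ i : Fin n, l.count i = l.length := by
  induction l with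
  | nil => simp
  | cons a t ih =>
    simp only [List.count_cons, List.length_cons, ← ih, Finset.sum_add_distrib]
    congr 1
    simp only [beq_iff_eq, eq_comm (a := a)]
    rw [Finset.sum_ite_eq' Finset.univ a (fun _ => 1)]
    simp
lemma favorite_const {m : ℕ} (R : Finset (Fin m)) (hR : R.Nonempty) :
    favorite (fun _ => (1:ℝ)) R = some (R.min' hR) := by
  have hfil : (R.filter fun j => ∀ j' ∈ R, (1:ℝ) ≤ 1) = R := by
    apply Finset.filter_true_of_mem; exact fun x hx j' hj' => le_rfl
  unfold favorite
  simp only [hfil]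
  rw [dif_pos hR]

lemma allocate_const_state {n m : ℕ} (π : List (Fin n)) (hlen : π.length = m) (d : Fin n)
    (k : ℕ) (hk : k ≤ m) :
    (π.take k).foldl (pickStep (fun _ _ => (1:ℝ))) (Finset.univ, fun _ => ∅) =
      (univ.filter (fun j : Fin m => k ≤ j.val),
       fun i => univ.filter (fun j : Fin m => j.val < k ∧ π.getD j.val d = i)) := by
  induction k with
  | zero => simp
  | succ k ih =>
    have hk' : k < π.length := by omega
    have hkm : k < m := by omega
    rw [foldl_take_succ _ _ _ k hk', ih (by omega)]
    have hne : (univ.filter (fun j : Fin m => k ≤ j.val)).Nonempty :=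
      ⟨⟨k, hkm⟩, by simp⟩
    have hmin : (univ.filter (fun j : Fin m => k ≤ j.val)).min' hne = ⟨k, hkm⟩ := by
      apply le_antisymm
      · exact Finset.min'_le _ _ (by simp)
      · have := Finset.min'_mem _ hne
        simp only [Finset.mem_filter] at this
        exact this.2
    have hget : π.getD k d = π.get ⟨k, hk'⟩ := by
      rw [List.getD_eq_getElem?_getD, List.getElem?_eq_getElem hk']; rfl
    show pickStep _ _ _ = _
    unfold pickStep
    rw [favorite_const _ hne]
    simp only [hmin, Prod.mk.injEq]
    constructor
    · ext j
      simp only [Finset.mem_erase, Finset.mem_filter, Finset.mem_univ, true_and,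
        Ne, Fin.ext_iff]
      omega
    · funext i
      rcases eq_or_ne i (π.get ⟨k, hk'⟩) with h | h
      · subst h
        rw [Function.update_self]
        ext j
        simp only [Finset.mem_insert, Finset.mem_filter, Finset.mem_univ, true_and,
          Fin.ext_iff]
        constructor
        · rintro (h1 | ⟨h1, h2⟩)
          · refine ⟨by omega, ?_⟩
            have : j = (⟨k, hkm⟩ : Fin m) := Fin.ext h1
            subst this
            rw [hget]
          · exact ⟨by omega, h2⟩
        · rintro ⟨h1, h2⟩
          rcases eq_or_lt_of_le (Nat.lt_succ_iff.mp h1) with h3 | h3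
          · left; omega
          · right; exact ⟨h3, h2⟩
      · rw [Function.update_of_ne h]
        ext j
        simp only [Finset.mem_filter, Finset.mem_univ, true_and]
        constructor
        · rintro ⟨h1, h2⟩; exact ⟨by omega, h2⟩
        · rintro ⟨h1, h2⟩
          refine ⟨?_, h2⟩
          rcases eq_or_lt_of_le (Nat.lt_succ_iff.mp h1) with h3 | h3
          · exfalso
            apply h
            have : j = (⟨k, hkm⟩ : Fin m) := Fin.ext h3
            rw [this] at h2
            rw [← h2, hget]
          · exact h3

lemma allocate_const {n m : ℕ} (π : List (Fin n)) (hlen : π.length = m) (d i : Fin n) :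
    allocate (fun _ _ => (1:ℝ)) π i = univ.filter (fun j : Fin m => π.getD j.val d = i) := by
  unfold allocate
  have h1 : π = π.take m := by rw [← hlen, List.take_length]
  conv_lhs => rw [h1]
  rw [allocate_const_state π hlen d m le_rfl]
  ext j
  simp [j.isLt]

lemma card_filter_getD {n m : ℕ} (π : List (Fin n)) (hlen : π.length = m) (d i : Fin n) :
    (univ.filter (fun j : Fin m => π.getD j.val d = i)).card = π.count i := by
  rw [Finset.card_filter]
  rw [Fin.sum_univ_eq_sum_range (fun j => if π.getD j d = i then 1 else 0) m]
  subst hlen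
  induction π with
  | nil => simp
  | cons a t ih =>
    rw [List.length_cons, Finset.sum_range_succ']
    simp only [List.getD_cons_succ, List.getD_cons_zero, List.count_cons, ih]
    by_cases h : a = i
    · simp [h, add_comm]
    · simp [h]

lemma phi_step (N c k : ℕ) (hN : 0 < N) (hc : c < N) :
    k/N + (if c < k%N then 1 else 0) + (if k%N = c then 1 else 0)
      = (k+1)/N + (if c < (k+1)%N then 1 else 0) := by
  have hq := Nat.div_add_mod k N
  have hr : k % N < N := Nat.mod_lt _ hN
  rcases Nat.lt_or_ge (k % N + 1) N with h | h
  · have hk1 : k + 1 = N * (k / N) + (k % N + 1) := by omega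
    rw [hk1, Nat.mul_add_div hN, Nat.mul_add_mod, Nat.div_eq_of_lt h, Nat.mod_eq_of_lt h]
    split_ifs <;> omega
  · have hNe : k % N + 1 = N := by omega
    have hk1 : k + 1 = N * (k / N + 1) := by
      have : N * (k / N + 1) = N * (k / N) + N := by ring
      omega
    rw [hk1, Nat.mul_div_cancel_left _ hN, Nat.mul_mod_right]
    split_ifs <;> omega

lemma rr_count {α : Type*} [DecidableEq α] (N : ℕ) (hN : 0 < N) (e : ℕ → α)
    (he : ∀ c c', c < N → c' < N → e c = e c' → c = c') (k c : ℕ) (hc : c < N) :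
    ((List.range k).map (fun j => e (j % N))).count (e c)
      = k / N + if c < k % N then 1 else 0 := by
  induction k with
  | zero => simp
  | succ k ih =>
    rw [List.range_succ, List.map_append, List.count_append]
    have h1 : (List.map (fun j => e (j % N)) [k]).count (e c)
        = if k % N = c then 1 else 0 := by
      by_cases h : k % N = c
      · simp [h, List.count_singleton']
      · have hne : e (k % N) ≠ e c := fun hcon => h (he _ _ (Nat.mod_lt _ hN) hc hcon)
        simp [List.count_singleton', hne, h]
    rw [h1, ih]
    exact phi_step N c k hN hc

lemma rr_count_take {α : Type*} [DecidableEq α] (N : ℕ) (hN : 0 < N) (e : ℕ → α)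
    (he : ∀ c c', c < N → c' < N → e c = e c' → c = c') (M k c : ℕ) (hk : k ≤ M) (hc : c < N) :
    (((List.range M).map (fun j => e (j % N))).take k).count (e c)
      = k / N + if c < k % N then 1 else 0 := by
  rw [← List.map_take, List.take_range, Nat.min_eq_left hk]
  exact rr_count N hN e he k c hc
lemma constrA {f : ℕ → ℝ} (hf : IsDivisorFn f) (t₀ : ℕ) (ht₀ : 1 ≤ t₀) (hf0 : f 0 = 1)
    (hlt : f t₀ < t₀ + 1)
    (H : ∀ (n m : ℕ) (w : Fin n → ℝ), (∀ i, 0 < w i) →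
      ∀ π : List (Fin n), π.length = m → IsDivisorSeq f w π →
      ∀ u : Fin n → Fin m → ℝ, (∀ i j, 0 ≤ u i j) → isWPROP1 w u (allocate u π)) :
    False := by
  obtain ⟨hmono, hbound⟩ := hf
  set w : ℝ := (f t₀ + (t₀ + 1)) / 2 with hwdef
  have hft₀ : (t₀ : ℝ) ≤ f t₀ := (hbound t₀).1
  have ht₀R : (1 : ℝ) ≤ (t₀ : ℝ) := by exact_mod_cast ht₀
  have hw1 : f t₀ < w := by rw [hwdef]; linarith
  have hw2 : w < t₀ + 1 := by rw [hwdef]; linarith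
  have hwpos : 0 < w := by linarith
  obtain ⟨N, hNgt⟩ := exists_nat_gt (1 / ((t₀ : ℝ) + 1 - w))
  have hd : (0 : ℝ) < (t₀ : ℝ) + 1 - w := by linarith
  have hN1 : 1 < (N : ℝ) * ((t₀ : ℝ) + 1 - w) := by
    rw [div_lt_iff₀ hd] at hNgt; linarith
  have hNpos : 0 < N := by
    rcases Nat.eq_zero_or_pos N with h | h
    · subst h; simp at hN1; linarith
    · exact h
  set m := (t₀ + 1) * N with hmdef
  set e : ℕ → Fin (N + 1) := fun c => ⟨c % N + 1, by have := Nat.mod_lt c hNpos; omega⟩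
    with hedef
  have he : ∀ c c', c < N → c' < N → e c = e c' → c = c' := by
    intro c c' hc hc' hcc
    simp only [hedef, Fin.mk.injEq, Nat.mod_eq_of_lt hc, Nat.mod_eq_of_lt hc'] at hcc
    omega
  have hene : ∀ c, e c ≠ 0 := by
    intro c hcon
    have : c % N + 1 = 0 := by
      simpa [hedef, Fin.ext_iff] using hcon
    omega
  set π : List (Fin (N + 1)) := (List.range m).map (fun j => e (j % N)) with hπdef
  have hlen : π.length = m := by simp [hπdef]
  set W : Fin (N + 1) → ℝ := fun i => if i = 0 then 1 else w with hWdef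
  have hWpos : ∀ i, 0 < W i := by
    intro i; simp only [hWdef]; split_ifs
    · exact one_pos
    · exact hwpos
  have hcount0 : ∀ k, (π.take k).count (0 : Fin (N + 1)) = 0 := by
    intro k
    rw [List.count_eq_zero]
    intro hmem
    have hmem' := List.mem_of_mem_take hmem
    simp only [hπdef, List.mem_map] at hmem'
    obtain ⟨j, _, hj⟩ := hmem'
    exact hene _ hj
  have hcounte : ∀ k c, k ≤ m → c < N →
      (π.take k).count (e c) = k / N + if c < k % N then 1 else 0 := by
    intro k c hk hc
    exact rr_count_take N hNpos e he m k c hk hc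
  -- the divisor sequence property
  have hseq : IsDivisorSeq f W π := by
    intro k hk i
    have hkm : k < m := hlen ▸ hk
    have hget : π.get ⟨k, hk⟩ = e (k % N) := by
      simp [hπdef]
    have hcN : k % N < N := Nat.mod_lt _ hNpos
    have hrt : k / N ≤ t₀ := by
      have : k / N < t₀ + 1 := (Nat.div_lt_iff_lt_mul hNpos).mpr hkm
      omega
    have hcp : (π.take k).count (π.get ⟨k, hk⟩) = k / N := by
      rw [hget, hcounte k (k % N) (le_of_lt hkm) hcN]
      simp
    have hWp : W (π.get ⟨k, hk⟩) = w := by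
      rw [hget]; simp only [hWdef]; rw [if_neg (hene _)]
    by_cases hi0 : i = 0
    · subst hi0
      have hc0 : (π.take k).count (0 : Fin (N + 1)) = 0 := hcount0 k
      rw [hcp, hc0, hWp]
      have hW0 : W 0 = 1 := by simp [hWdef]
      rw [hW0]
      have hfr : f (k / N) ≤ f t₀ := hmono.monotone hrt
      have hstrict : f (k / N) / w < f 0 / 1 := by
        rw [hf0, div_one, div_lt_one hwpos]
        linarith
      exact ⟨le_of_lt hstrict, fun _ => hstrict⟩
    · have hival : 1 ≤ i.val := by
        rcases Nat.eq_zero_or_pos i.val with h | h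
        · exact absurd (Fin.ext h) hi0
        · exact h
      set c' := i.val - 1 with hc'def
      have hc'N : c' < N := by have := i.isLt; omega
      have hie : i = e c' := by
        apply Fin.ext
        simp only [hedef, Nat.mod_eq_of_lt hc'N]
        omega
      have hci : (π.take k).count i = k / N + if c' < k % N then 1 else 0 := by
        rw [hie]; exact hcounte k c' (le_of_lt hkm) hc'N
      have hWi : W i = w := by
        simp only [hWdef]; rw [if_neg hi0]
      rw [hcp, hci, hWp, hWi]
      rcases lt_trichotomy c' (k % N) with h | h | h
      · have hlt2 : f (k / N) / w < f (k / N + 1) / w := by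
          apply div_lt_div_of_pos_right ?_ hwpos
          exact hmono (Nat.lt_succ_self _)
        rw [if_pos h]
        exact ⟨le_of_lt hlt2, fun _ => hlt2⟩
      · rw [if_neg (by omega)]
        refine ⟨le_rfl, fun hcon => ?_⟩
        exfalso
        rw [hget, hie] at hcon
        have hvv : c' % N + 1 < k % N % N + 1 := hcon
        have h2 : k % N % N = k % N := Nat.mod_mod_of_dvd _ dvd_rfl
        have h3 : c' % N = c' := Nat.mod_eq_of_lt hc'N
        omega
      · rw [if_neg (by omega)]
        refine ⟨le_rfl, fun hcon => ?_⟩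
        exfalso
        rw [hget, hie] at hcon
        have hvv : c' % N + 1 < k % N % N + 1 := hcon
        have h2 : k % N % N = k % N := Nat.mod_mod_of_dvd _ dvd_rfl
        have h3 : c' % N = c' := Nat.mod_eq_of_lt hc'N
        omega
  -- apply the hypothesis
  have hW := H (N + 1) m W hWpos π hlen hseq (fun _ _ => 1) (fun _ _ => zero_le_one)
  obtain ⟨B, hBsub, hBcard, hineq⟩ := hW 0
  have hM0 : allocate (fun _ _ => (1 : ℝ)) π 0 = (∅ : Finset (Fin m)) := by
    rw [allocate_const π hlen 0 0]
    apply Finset.card_eq_zero.mp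
    rw [card_filter_getD π hlen 0 0]
    have : π.take m = π := by rw [← hlen, List.take_length]
    rw [← this]
    exact hcount0 m
  rw [hM0] at hineq
  have hsum1 : (∑ x ∈ (∅ : Finset (Fin m)), (1 : ℝ)) = 0 := by simp
  have hsum2 : (∑ x : Fin m, (1 : ℝ)) = m := by simp
  have hsum3 : (∑ x ∈ B, (1 : ℝ)) = B.card := by simp
  have hsumW : (∑ i', W i') = 1 + N * w := by
    rw [Fin.sum_univ_succ]
    have h1 : W 0 = 1 := by simp [hWdef]
    have h2 : ∀ i : Fin N, W i.succ = w := by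
      intro i; simp only [hWdef]; rw [if_neg (Fin.succ_ne_zero i)]
    rw [h1]
    congr 1
    rw [Finset.sum_congr rfl (fun i _ => h2 i)]
    simp [mul_comm]
  rw [hsum1, hsum2, hsum3, hsumW] at hineq
  have hS : (0 : ℝ) < 1 + N * w := by positivity
  have hBc1 : (B.card : ℝ) ≤ 1 := by exact_mod_cast hBcard
  have hW01 : W 0 = 1 := by simp [hWdef]
  rw [hW01] at hineq
  -- hineq : 1 / (1 + N*w) * m - B.card ≤ 0
  have hmR : (m : ℝ) = ((t₀ : ℝ) + 1) * N := by
    rw [hmdef]; push_cast; ring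
  have hmgt : (1 + (N : ℝ) * w) < m := by
    rw [hmR]; nlinarith
  have h4 : (m : ℝ) / (1 + N * w) ≤ 1 := by
    rw [one_div, inv_mul_eq_div] at hineq
    linarith
  have h5 : (m : ℝ) ≤ 1 + N * w := (div_le_one hS).mp h4
  linarith
lemma exists_paramsB {f : ℕ → ℝ} (hmono : StrictMono f)
    (hbound : ∀ t : ℕ, (t : ℝ) ≤ f t ∧ f t ≤ t + 1) (h0 : f 0 < 1) :
    ∃ t₁ : ℕ, 1 ≤ t₁ ∧ ∃ w₁ : ℝ,
      f (t₁ - 1) ≤ w₁ * f 0 ∧ w₁ * f 0 < f t₁ ∧ (t₁ : ℝ) + 2 < w₁ := by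
  have hf00 : 0 ≤ f 0 := le_trans (by norm_num) (hbound 0).1
  rcases eq_or_lt_of_le hf00 with hz | hpos
  · refine ⟨1, le_rfl, 4, ?_, ?_, by norm_num⟩
    · simp [← hz]
    · rw [← hz, mul_zero]
      calc (0:ℝ) = f 0 := hz
      _ < f 1 := hmono (by norm_num)
  · obtain ⟨t₁, ht₁⟩ := exists_nat_gt (2 * f 0 / (1 - f 0))
    have hd : (0:ℝ) < 1 - f 0 := by linarith
    have ht₁big : 2 * f 0 < (t₁ : ℝ) * (1 - f 0) := by
      rw [div_lt_iff₀ hd] at ht₁; linarith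
    have ht₁1 : 1 ≤ t₁ := by
      by_contra hcon
      have : t₁ = 0 := by omega
      subst this
      simp at ht₁big
      linarith
    have hkey : ((t₁ : ℝ) + 2) * f 0 < f t₁ := by
      have h1 : ((t₁ : ℝ)) ≤ f t₁ := (hbound t₁).1
      nlinarith
    set a : ℝ := max (f (t₁ - 1) / f 0) ((t₁ : ℝ) + 2) with hadef
    set b : ℝ := f t₁ / f 0 with hbdef
    have hab : a < b := by
      apply max_lt
      · apply div_lt_div_of_pos_right _ hpos
        exact hmono (by omega)
      · rw [lt_div_iff₀ hpos]; linarith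
    refine ⟨t₁, ht₁1, (a + b) / 2, ?_, ?_, ?_⟩
    · have h1 : f (t₁ - 1) / f 0 ≤ (a + b) / 2 := by
        have := le_max_left (f (t₁ - 1) / f 0) ((t₁ : ℝ) + 2)
        rw [hadef] at *
        linarith [this]
      rw [div_le_iff₀ hpos] at h1
      linarith
    · have h1 : (a + b) / 2 < b := by linarith
      rw [hbdef, lt_div_iff₀ hpos] at h1
      linarith
    · have := le_max_right (f (t₁ - 1) / f 0) ((t₁ : ℝ) + 2)
      have h1 : a < (a+b)/2 := by linarith
      calc (t₁ : ℝ) + 2 ≤ a := le_max_right _ _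
      _ < (a + b) / 2 := h1

lemma constrB {f : ℕ → ℝ} (hf : IsDivisorFn f) (t₁ : ℕ) (ht₁ : 1 ≤ t₁) (w₁ : ℝ)
    (hc1 : f (t₁ - 1) ≤ w₁ * f 0) (hc2 : w₁ * f 0 < f t₁) (hc3 : (t₁ : ℝ) + 2 < w₁)
    (H : ∀ (n m : ℕ) (w : Fin n → ℝ), (∀ i, 0 < w i) →
      ∀ π : List (Fin n), π.length = m → IsDivisorSeq f w π →
      ∀ u : Fin n → Fin m → ℝ, (∀ i j, 0 ≤ u i j) → isWPROP1 w u (allocate u π)) :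
    False := by
  obtain ⟨hmono, hbound⟩ := hf
  have ht₁R : (1:ℝ) ≤ (t₁:ℝ) := by exact_mod_cast ht₁
  have hw₁pos : 0 < w₁ := by linarith
  have hw₁t : (t₁ : ℝ) + 1 < w₁ := by linarith
  obtain ⟨N, hNgt⟩ := exists_nat_gt (w₁ / (w₁ - ((t₁:ℝ) + 1)))
  have hd : (0:ℝ) < w₁ - ((t₁:ℝ) + 1) := by linarith
  have hN1 : w₁ < (N:ℝ) * (w₁ - ((t₁:ℝ) + 1)) := by
    rw [div_lt_iff₀ hd] at hNgt; linarith
  have hNpos : 0 < N := by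
    rcases Nat.eq_zero_or_pos N with h | h
    · subst h; simp at hN1; linarith
    · exact h
  set m := t₁ + N with hmdef
  set e : ℕ → Fin (N + 1) := fun c => ⟨c % N + 1, by have := Nat.mod_lt c hNpos; omega⟩
    with hedef
  have he : ∀ c c', c < N → c' < N → e c = e c' → c = c' := by
    intro c c' hc hc' hcc
    simp only [hedef, Fin.mk.injEq, Nat.mod_eq_of_lt hc, Nat.mod_eq_of_lt hc'] at hcc
    omega
  have hene : ∀ c, e c ≠ 0 := by
    intro c hcon
    have : c % N + 1 = 0 := by simpa [hedef, Fin.ext_iff] using hcon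
    omega
  set π₂ : List (Fin (N + 1)) := (List.range N).map (fun j => e (j % N)) with hπ₂def
  set π : List (Fin (N + 1)) := List.replicate t₁ (0 : Fin (N+1)) ++ π₂ with hπdef
  have hlen₂ : π₂.length = N := by simp [hπ₂def]
  have hlen : π.length = m := by simp [hπdef, hπ₂def, hmdef]
  set W : Fin (N + 1) → ℝ := fun i => if i = 0 then w₁ else 1 with hWdef
  have hWpos : ∀ i, 0 < W i := by
    intro i; simp only [hWdef]; split_ifs
    · exact hw₁pos
    · exact one_pos
  -- prefix computations
  have htake1 : ∀ k, k ≤ t₁ → π.take k = List.replicate k (0 : Fin (N+1)) := by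
    intro k hk
    rw [hπdef, List.take_append_of_le_length (by simp [hk]), List.take_replicate,
      Nat.min_eq_left hk]
  have htake2 : ∀ j, π.take (t₁ + j) = List.replicate t₁ (0 : Fin (N+1)) ++ π₂.take j := by
    intro j
    rw [hπdef, List.take_append]
    congr 1
    · rw [List.take_replicate]
      congr 1
      omega
    · congr 1
      simp
  have hcnt₂ : ∀ j c, j ≤ N → c < N →
      (π₂.take j).count (e c) = if c < j then 1 else 0 := by
    intro j c hj hc
    rw [hπ₂def, rr_count_take N hNpos e he N j c hj hc]
    rcases eq_or_lt_of_le hj with h | h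
    · subst h
      simp [Nat.div_self hNpos, Nat.mod_self, hc]
    · simp [Nat.div_eq_of_lt h, Nat.mod_eq_of_lt h]
  have hcnt₂0 : ∀ j, (π₂.take j).count (0 : Fin (N+1)) = 0 := by
    intro j
    rw [List.count_eq_zero]
    intro hmem
    have hmem' := List.mem_of_mem_take hmem
    simp only [hπ₂def, List.mem_map] at hmem'
    obtain ⟨x, _, hx⟩ := hmem'
    exact hene _ hx
  -- get computations
  have hget1 : ∀ (k : ℕ) (hk : k < π.length), k < t₁ → π.get ⟨k, hk⟩ = 0 := by
    intro k hk hkt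
    have h1 : π[k]? = some 0 := by
      rw [hπdef, List.getElem?_append_left (by simp [hkt])]
      rw [List.getElem?_eq_getElem (by simp [hkt])]
      congr 1
      exact List.getElem_replicate ..
    have h2 : π[k]? = some (π.get ⟨k, hk⟩) := by
      rw [List.getElem?_eq_getElem hk]; rfl
    rw [h1] at h2
    exact (Option.some.injEq _ _ ▸ h2).symm ▸ rfl
  have hget2 : ∀ (j : ℕ) (hk : t₁ + j < π.length), π.get ⟨t₁ + j, hk⟩ = e (j % N) := by
    intro j hk
    have hjN : j < N := by
      have := hlen ▸ hk; omega
    have h1 : π[t₁ + j]? = some (e (j % N)) := by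
      rw [hπdef, List.getElem?_append_right (by simp)]
      simp only [List.length_replicate, Nat.add_sub_cancel_left, hπ₂def]
      rw [List.getElem?_map, List.getElem?_range hjN]
      rfl
    have h2 : π[t₁ + j]? = some (π.get ⟨t₁ + j, hk⟩) := by
      rw [List.getElem?_eq_getElem hk]; rfl
    rw [h1] at h2
    exact (Option.some.injEq _ _ ▸ h2).symm ▸ rfl
  have hseq : IsDivisorSeq f W π := by
    intro k hk i
    have hkm : k < m := hlen ▸ hk
    rcases Nat.lt_or_ge k t₁ with hkt | hkt
    · -- agent 0 picking
      have hg := hget1 k hk hkt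
      rw [hg]
      have hcp : (π.take k).count (0 : Fin (N+1)) = k := by
        rw [htake1 k (le_of_lt hkt)]
        simp
      rw [hcp]
      have hW0 : W 0 = w₁ := by simp [hWdef]
      rw [hW0]
      refine ?_
      have hmain : ∀ i : Fin (N+1), f k / w₁ ≤ f ((π.take k).count i) / W i := by
        intro i
        by_cases hi0 : i = 0
        · subst hi0; rw [hcp, hW0]
        · have hWi : W i = 1 := by simp only [hWdef]; rw [if_neg hi0]
          have hival : 1 ≤ i.val := by
            rcases Nat.eq_zero_or_pos i.val with h | h
            · exact absurd (Fin.ext h) hi0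
            · exact h
          have hci : (π.take k).count i = 0 := by
            have h0i : ¬ ((0 : Fin (N+1)) = i) := fun h => hi0 h.symm
            rw [htake1 k (le_of_lt hkt), List.count_replicate]
            simp [h0i]
          rw [hci, hWi, div_one, div_le_iff₀ hw₁pos]
          calc f k ≤ f (t₁ - 1) := hmono.monotone (by omega)
          _ ≤ w₁ * f 0 := hc1
          _ = f 0 * w₁ := by ring
      exact ⟨hmain i, fun hcon => absurd hcon (by simp)⟩
    · -- a clone picking
      obtain ⟨j, rfl⟩ : ∃ j, k = t₁ + j := ⟨k - t₁, by omega⟩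
      have hjN : j < N := by omega
      have hg := hget2 j hk
      rw [hg]
      have hjmod : j % N = j := Nat.mod_eq_of_lt hjN
      have hWp : W (e (j % N)) = 1 := by
        simp only [hWdef]; rw [if_neg (hene _)]
      have hcp : (π.take (t₁ + j)).count (e (j % N)) = 0 := by
        have h0e : ¬ ((0 : Fin (N+1)) = e (j % N)) := fun h => hene _ h.symm
        rw [htake2 j, List.count_append, List.count_replicate, if_neg (by simp [h0e]), hjmod,
          hcnt₂ j j (le_of_lt hjN) hjN]
        simp
      rw [hcp, hWp]
      by_cases hi0 : i = 0
      · subst hi0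
        have hc0 : (π.take (t₁ + j)).count (0 : Fin (N+1)) = t₁ := by
          rw [htake2 j, List.count_append, List.count_replicate_self, hcnt₂0 j]
          omega
        rw [hc0]
        have hW0 : W 0 = w₁ := by simp [hWdef]
        rw [hW0]
        have hstrict : f 0 / 1 < f t₁ / w₁ := by
          rw [div_lt_div_iff₀ one_pos hw₁pos]
          calc f 0 * w₁ = w₁ * f 0 := by ring
          _ < f t₁ := hc2
          _ = f t₁ * 1 := by ring
        exact ⟨le_of_lt hstrict, fun _ => hstrict⟩
      · have hWi : W i = 1 := by simp only [hWdef]; rw [if_neg hi0]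
        have hival : 1 ≤ i.val := by
          rcases Nat.eq_zero_or_pos i.val with h | h
          · exact absurd (Fin.ext h) hi0
          · exact h
        set c' := i.val - 1 with hc'def
        have hc'N : c' < N := by have := i.isLt; omega
        have hie : i = e c' := by
          apply Fin.ext
          simp only [hedef, Nat.mod_eq_of_lt hc'N]
          omega
        have hci : (π.take (t₁ + j)).count i = if c' < j then 1 else 0 := by
          have h0e : ¬ ((0 : Fin (N+1)) = e c') := fun h => hene _ h.symm
          rw [hie, htake2 j, List.count_append, List.count_replicate, if_neg (by simp [h0e]),
            hcnt₂ j c' (le_of_lt hjN) hc'N]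
          simp
        rw [hci, hWi]
        rcases lt_trichotomy c' j with h | h | h
        · rw [if_pos h]
          have hstrict : f 0 / 1 < f 1 / 1 := by
            rw [div_lt_div_iff₀ one_pos one_pos]
            have := hmono (Nat.lt_succ_self 0)
            nlinarith
          exact ⟨le_of_lt hstrict, fun _ => hstrict⟩
        · rw [if_neg (by omega)]
          refine ⟨le_rfl, fun hcon => ?_⟩
          exfalso
          rw [hie] at hcon
          have hvv : c' % N + 1 < j % N % N + 1 := hcon
          have h2 : j % N % N = j % N := Nat.mod_mod_of_dvd _ dvd_rfl
          have h3 : c' % N = c' := Nat.mod_eq_of_lt hc'N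
          omega
        · rw [if_neg (by omega)]
          refine ⟨le_rfl, fun hcon => ?_⟩
          exfalso
          rw [hie] at hcon
          have hvv : c' % N + 1 < j % N % N + 1 := hcon
          have h2 : j % N % N = j % N := Nat.mod_mod_of_dvd _ dvd_rfl
          have h3 : c' % N = c' := Nat.mod_eq_of_lt hc'N
          omega
  -- apply the hypothesis
  have hWP := H (N + 1) m W hWpos π hlen hseq (fun _ _ => 1) (fun _ _ => zero_le_one)
  obtain ⟨B, hBsub, hBcard, hineq⟩ := hWP 0
  have hcnt0π : π.count (0 : Fin (N+1)) = t₁ := by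
    have h1 : π.take m = π := by rw [← hlen, List.take_length]
    have h2 := htake2 N
    rw [hmdef] at h1
    rw [h1] at h2
    rw [h2, List.count_append, List.count_replicate_self, hcnt₂0 N]
    omega
  have hM0card : (allocate (m := m) (fun _ _ => (1 : ℝ)) π 0).card = t₁ := by
    rw [allocate_const π hlen 0 0, card_filter_getD π hlen 0 0, hcnt0π]
  have hsum1 : (∑ x ∈ allocate (m := m) (fun _ _ => (1 : ℝ)) π 0, (1 : ℝ)) = t₁ := by
    rw [Finset.sum_const, hM0card]; simp
  have hsum2 : (∑ x : Fin m, (1 : ℝ)) = m := by simp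
  have hsum3 : (∑ x ∈ B, (1 : ℝ)) = B.card := by simp
  have hsumW : (∑ i', W i') = w₁ + N := by
    rw [Fin.sum_univ_succ]
    have h1 : W 0 = w₁ := by simp [hWdef]
    have h2 : ∀ i : Fin N, W i.succ = 1 := by
      intro i; simp only [hWdef]; rw [if_neg (Fin.succ_ne_zero i)]
    rw [h1]
    congr 1
    rw [Finset.sum_congr rfl (fun i _ => h2 i)]
    simp
  rw [hsum1, hsum2, hsum3, hsumW] at hineq
  have hW01 : W 0 = w₁ := by simp [hWdef]
  rw [hW01] at hineq
  have hS : (0 : ℝ) < w₁ + N := by positivity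
  have hBc1 : (B.card : ℝ) ≤ 1 := by exact_mod_cast hBcard
  have hmR : (m : ℝ) = (t₁ : ℝ) + N := by rw [hmdef]; push_cast; ring
  -- hineq : w₁ / (w₁ + N) * m - B.card ≤ t₁
  have hkey : ((t₁:ℝ) + 1) * (w₁ + N) < w₁ * m := by
    rw [hmR]; nlinarith
  have h4 : w₁ * m / (w₁ + N) ≤ (t₁ : ℝ) + 1 := by
    rw [div_mul_eq_mul_div] at hineq
    linarith
  rw [div_le_iff₀ hS] at h4
  nlinarith

lemma forward_dir {f : ℕ → ℝ} (hf : IsDivisorFn f)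
    (H : ∀ (n m : ℕ) (w : Fin n → ℝ), (∀ i, 0 < w i) →
      ∀ π : List (Fin n), π.length = m → IsDivisorSeq f w π →
      ∀ u : Fin n → Fin m → ℝ, (∀ i j, 0 ≤ u i j) → isWPROP1 w u (allocate u π)) :
    ∀ t : ℕ, f t = t + 1 := by
  intro t
  induction t using Nat.strong_induction_on with
  | _ t ih =>
    by_contra hne
    have hlt : f t < t + 1 := lt_of_le_of_ne (hf.2 t).2 hne
    rcases Nat.eq_zero_or_pos t with h0 | hpos
    · subst h0
      have h01 : f 0 < 1 := by simpa using hlt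
      obtain ⟨t₁, ht₁, w₁, hc1, hc2, hc3⟩ := exists_paramsB hf.1 hf.2 h01
      exact constrB hf t₁ ht₁ w₁ hc1 hc2 hc3 H
    · have hf0 : f 0 = 1 := by
        have := ih 0 hpos
        simpa using this
      exact constrA hf t hpos hf0 hlt H
lemma pickStep_spec {n m : ℕ} (u : Fin n → Fin m → ℝ)
    (s : Finset (Fin m) × (Fin n → Finset (Fin m))) (a : Fin n) (hne : s.1.Nonempty) :
    ∃ g, favorite (u a) s.1 = some g ∧ g ∈ s.1 ∧ (∀ j ∈ s.1, u a j ≤ u a g) ∧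
      pickStep u s a = (s.1.erase g, Function.update s.2 a (insert g (s.2 a))) := by
  obtain ⟨g0, hg0, hmax⟩ := s.1.exists_max_image (u a) hne
  have hfne : (s.1.filter fun j => ∀ j' ∈ s.1, u a j' ≤ u a j).Nonempty :=
    ⟨g0, Finset.mem_filter.mpr ⟨hg0, hmax⟩⟩
  set g := (s.1.filter fun j => ∀ j' ∈ s.1, u a j' ≤ u a j).min' hfne with hgdef
  have hgmem := Finset.min'_mem _ hfne
  rw [Finset.mem_filter] at hgmem
  have hfav : favorite (u a) s.1 = some g := by
    unfold favorite
    rw [dif_pos hfne]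
  refine ⟨g, hfav, hgmem.1, hgmem.2, ?_⟩
  unfold pickStep
  rw [hfav]

lemma abel_bound (D a : ℕ → ℝ) (c : ℝ) (hD : ∀ j, D (j+1) ≤ D j) (hD0 : ∀ j, 0 ≤ D j)
    (hA : ∀ K : ℕ, (∑ j ∈ Finset.range K, a j) ≤ K * c) :
    ∀ K : ℕ, ∑ j ∈ Finset.range K, a j * D j ≤ c * ∑ j ∈ Finset.range K, D j := by
  have key : ∀ K : ℕ, ∑ j ∈ Finset.range K, a j * D j ≤
      c * ∑ j ∈ Finset.range K, D j - ((K : ℝ) * c - ∑ j ∈ Finset.range K, a j) * D K := by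
    intro K
    induction K with
    | zero => simp
    | succ K ih =>
      rw [Finset.sum_range_succ (f := fun j => a j * D j), Finset.sum_range_succ (f := D),
        Finset.sum_range_succ (f := a)]
      have h1 : ((K : ℝ) + 1) * c - (∑ j ∈ Finset.range K, a j + a K) ≥ 0 := by
        have := hA (K + 1)
        rw [Finset.sum_range_succ (f := a)] at this
        push_cast at this ⊢
        linarith
      have h2 : ((K : ℝ) + 1) * c - (∑ j ∈ Finset.range K, a j + a K) ≥ 0 → True := fun _ => trivial
      have h3 : (((K : ℝ) + 1) * c - (∑ j ∈ Finset.range K, a j + a K)) * D (K + 1)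
          ≤ (((K : ℝ) + 1) * c - (∑ j ∈ Finset.range K, a j + a K)) * D K :=
        mul_le_mul_of_nonneg_left (hD K) h1
      push_cast
      nlinarith [ih]
  intro K
  have h1 := key K
  have h2 : ((K : ℝ) * c - ∑ j ∈ Finset.range K, a j) ≥ 0 := by
    have := hA K; linarith
  nlinarith [hD0 K]

lemma nat_step_mono (g : ℕ → ℕ) (hstep : ∀ q, g q ≤ g (q+1) ∧ g (q+1) ≤ g q + 1) :
    Monotone g := by
  apply monotone_nat_of_le_succ
  exact fun q => (hstep q).1

lemma cnt_hit (g : ℕ → ℕ) (hg0 : g 0 = 0)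
    (hstep : ∀ q, g q ≤ g (q+1) ∧ g (q+1) ≤ g q + 1) (M j : ℕ) (hj : j < g M) :
    ∃ T, T < M ∧ g T = j ∧ g (T+1) = j + 1 := by
  have hM : 1 ≤ M := by
    by_contra h
    have : M = 0 := by omega
    subst this; omega
  have hex : ∃ T, j < g (T+1) := ⟨M - 1, by
    have : M - 1 + 1 = M := by omega
    rw [this]; exact hj⟩
  set T := Nat.find hex with hTdef
  have hT : j < g (T+1) := Nat.find_spec hex
  have hTle : T ≤ M - 1 := Nat.find_min' hex (by
    have : M - 1 + 1 = M := by omega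
    rw [this]; exact hj)
  have hgT : g T ≤ j := by
    rcases Nat.eq_zero_or_pos T with h | h
    · rw [h, hg0]; omega
    · have hmin := Nat.find_min hex (show T - 1 < T by omega)
      have : T - 1 + 1 = T := by omega
      rw [this] at hmin
      omega
  have := hstep T
  exact ⟨T, by omega, by omega, by omega⟩

lemma count_take_eq_card_filter {n : ℕ} (π : List (Fin n)) (d a : Fin n) (k : ℕ)
    (hk : k ≤ π.length) :
    (π.take k).count a = ((Finset.range k).filter (fun q => π.getD q d = a)).card := by
  induction k with
  | zero => simp
  | succ k ih =>
    have hk' : k < π.length := by omega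
    rw [count_take_succ π k hk' a, ih (by omega), Finset.range_add_one, Finset.filter_insert]
    have hget : π.getD k d = π.get ⟨k, hk'⟩ := by
      rw [List.getD_eq_getElem?_getD, List.getElem?_eq_getElem hk']; rfl
    by_cases h : π.get ⟨k, hk'⟩ = a
    · rw [if_pos h, if_pos (by rw [hget]; exact h), Finset.card_insert_of_notMem (by simp)]
    · rw [if_neg h, if_neg (by rw [hget]; exact h)]
      omega

lemma count_take_mono {n : ℕ} (π : List (Fin n)) (a : Fin n) :
    Monotone (fun k => (π.take k).count a) := by
  intro k k' hk
  have h1 : π.take k = (π.take k').take k := by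
    rw [List.take_take, Nat.min_eq_left hk]
  simp only []
  rw [h1]
  exact List.Sublist.count_le a (List.take_sublist _ _)
lemma jefferson_WPROP1 {n m : ℕ} (w : Fin n → ℝ) (hw : ∀ i, 0 < w i)
    (π : List (Fin n)) (hlen : π.length = m)
    (hseq : IsDivisorSeq (fun t => (t : ℝ) + 1) w π)
    (u : Fin n → Fin m → ℝ) (hu : ∀ i j, 0 ≤ u i j) :
    isWPROP1 w u (allocate u π) := by
  intro i
  have hWsum : 0 < ∑ i', w i' := Finset.sum_pos (fun j _ => hw j) ⟨i, Finset.mem_univ i⟩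
  have hwiW : w i ≤ ∑ i', w i' :=
    Finset.single_le_sum (fun j _ => le_of_lt (hw j)) (Finset.mem_univ i)
  -- trivial case: agent i got everything
  by_cases hO : Finset.univ \ allocate u π i = ∅
  · refine ⟨∅, Finset.empty_subset _, by simp, ?_⟩
    have hMi : allocate u π i = Finset.univ := by
      have h1 : (Finset.univ : Finset (Fin m)) ⊆ allocate u π i :=
        Finset.sdiff_eq_empty_iff_subset.mp hO
      exact Finset.eq_univ_of_forall (fun x => h1 (Finset.mem_univ x))
    rw [hMi]
    simp only [Finset.sum_empty, sub_zero]
    have hU : 0 ≤ ∑ x, u i x := Finset.sum_nonneg (fun x _ => hu i x)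
    have h2 : w i / (∑ i', w i') ≤ 1 := by
      rw [div_le_one hWsum]; exact hwiW
    nlinarith
  -- main case
  have hOne : (Finset.univ \ allocate u π i).Nonempty := Finset.nonempty_of_ne_empty hO
  have hm : 0 < m := by
    rcases Nat.eq_zero_or_pos m with h | h
    · exfalso
      obtain ⟨x, _⟩ := hOne
      subst h
      exact absurd x.isLt (by omega)
    · exact h
  have j₀ : Fin m := ⟨0, hm⟩
  obtain ⟨bs, hbsO, hbsmax⟩ := (Finset.univ \ allocate u π i).exists_max_image (u i) hOne
  set β : ℝ := u i bs with hβdef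
  have hβ0 : 0 ≤ β := hu i bs
  -- the state machine
  set st : ℕ → Finset (Fin m) × (Fin n → Finset (Fin m)) :=
    fun k => (π.take k).foldl (pickStep u) (Finset.univ, fun _ => ∅) with hstdef
  set itm : ℕ → Fin m := fun q => (favorite (u (π.getD q i)) (st q).1).getD j₀ with hitmdef
  set val : ℕ → ℝ := fun q => u i (itm q) with hvaldef
  have hval0 : ∀ q, 0 ≤ val q := fun q => hu i (itm q)
  have hgd : ∀ (q : ℕ) (hq : q < π.length), π.get ⟨q, hq⟩ = π.getD q i := by
    intro q hq
    rw [List.getD_eq_getElem?_getD, List.getElem?_eq_getElem hq]; rfl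
  have hsucc : ∀ q, q < m → st (q+1) = pickStep u (st q) (π.getD q i) := by
    intro q hq
    have hq' : q < π.length := by omega
    rw [hstdef]
    simp only []
    rw [foldl_take_succ (pickStep u) _ π q hq', hgd q hq']
  have hst0 : st 0 = (Finset.univ, fun _ => ∅) := by simp [hstdef]
  have hcard : ∀ k, k ≤ m → ((st k).1).card = m - k := by
    intro k
    induction k with
    | zero => intro _; rw [hst0]; simp
    | succ k ih =>
      intro hk1
      have hk : k < m := by omega
      have hne' : (st k).1.Nonempty := by
        rw [← Finset.card_pos, ih (by omega)]; omega
      obtain ⟨g, hfav, hg1, hg2, hg3⟩ := pickStep_spec u (st k) (π.getD k i) hne'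
      rw [hsucc k hk, hg3]
      simp only []
      rw [Finset.card_erase_of_mem hg1, ih (by omega)]
      omega
  have hne : ∀ q, q < m → (st q).1.Nonempty := by
    intro q hq
    rw [← Finset.card_pos, hcard q (le_of_lt hq)]
    omega
  have hspec : ∀ q, q < m →
      itm q ∈ (st q).1 ∧ (∀ j ∈ (st q).1, u (π.getD q i) j ≤ u (π.getD q i) (itm q)) ∧
      (st (q+1)).1 = (st q).1.erase (itm q) ∧
      (st (q+1)).2 = Function.update (st q).2 (π.getD q i)
        (insert (itm q) ((st q).2 (π.getD q i))) := by
    intro q hq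
    obtain ⟨g, hfav, hg1, hg2, hg3⟩ := pickStep_spec u (st q) (π.getD q i) (hne q hq)
    have hit : itm q = g := by
      rw [hitmdef]; simp only []; rw [hfav]; rfl
    rw [hit]
    exact ⟨hg1, hg2, by rw [hsucc q hq, hg3], by rw [hsucc q hq, hg3]⟩
  have hRmono : ∀ k k', k ≤ k' → k' ≤ m → (st k').1 ⊆ (st k).1 := by
    intro k k' hkk'
    induction k', hkk' using Nat.le_induction with
    | base => intro _; exact subset_rfl
    | succ k' hkk' ih =>
      intro hk'm
      have h3 := (hspec k' (by omega)).2.2.1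
      refine subset_trans ?_ (ih (by omega))
      rw [h3]
      exact Finset.erase_subset _ _
  have hMmono : ∀ i' k k', k ≤ k' → k' ≤ m → (st k).2 i' ⊆ (st k').2 i' := by
    intro i' k k' hkk'
    induction k', hkk' using Nat.le_induction with
    | base => intro _; exact subset_rfl
    | succ k' hkk' ih =>
      intro hk'm
      have h4 := (hspec k' (by omega)).2.2.2
      refine subset_trans (ih (by omega)) ?_
      rw [h4]
      by_cases hia : i' = π.getD k' i
      · subst hia; rw [Function.update_self]; exact Finset.subset_insert _ _
      · rw [Function.update_of_ne hia]
  have hval_le : ∀ p q, p < q → q < m → π.getD p i = i → val q ≤ val p := by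
    intro p q hpq hqm hpi
    have h1 : itm q ∈ (st q).1 := (hspec q hqm).1
    have h2 : (st q).1 ⊆ (st p).1 := hRmono p q (le_of_lt hpq) (le_of_lt hqm)
    have h3 := (hspec p (lt_trans hpq hqm)).2.1 (itm q) (h2 h1)
    rw [hpi] at h3
    exact h3
  have hP : ∀ k, k ≤ m →
      ((∀ i' x, x ∈ (st k).2 i' → x ∉ (st k).1) ∧
       (∀ i' i'' x, i' ≠ i'' → x ∈ (st k).2 i' → x ∉ (st k).2 i'') ∧
       (∀ x, x ∈ (st k).1 ∨ ∃ i', x ∈ (st k).2 i') ∧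
       (∀ i', (∑ x ∈ (st k).2 i', u i x) =
          ∑ q ∈ (Finset.range k).filter (fun q => π.getD q i = i'), val q)) := by
    intro k
    induction k with
    | zero =>
      intro _
      rw [hst0]
      refine ⟨by simp, by simp, by simp, by simp⟩
    | succ k ih =>
      intro hk1
      have hk : k < m := by omega
      obtain ⟨ih1, ih2, ih3, ih4⟩ := ih (by omega)
      obtain ⟨hg1, hg2, hR1, hR2⟩ := hspec k hk
      refine ⟨?_, ?_, ?_, ?_⟩
      · intro i' x hx hxR
        rw [hR1] at hxR
        rw [hR2] at hx
        by_cases hia : i' = π.getD k i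
        · subst hia
          rw [Function.update_self] at hx
          rcases Finset.mem_insert.mp hx with h | h
          · subst h; exact absurd hxR (Finset.notMem_erase _ _)
          · exact ih1 _ x h (Finset.mem_of_mem_erase hxR)
        · rw [Function.update_of_ne hia] at hx
          exact ih1 _ x hx (Finset.mem_of_mem_erase hxR)
      · intro i' i'' x hne' hx hx'
        rw [hR2] at hx hx'
        by_cases hia : i' = π.getD k i
        · rw [hia, Function.update_self] at hx
          rw [Function.update_of_ne (fun h => hne' (hia.trans h.symm))] at hx'
          rcases Finset.mem_insert.mp hx with h | h
          · subst h; exact (ih1 i'' _ hx') hg1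
          · exact ih2 _ _ x (by rw [← hia] at *; exact hne') (hia ▸ h) hx'
        · rw [Function.update_of_ne hia] at hx
          by_cases hia' : i'' = π.getD k i
          · rw [hia', Function.update_self] at hx'
            rcases Finset.mem_insert.mp hx' with h | h
            · subst h; exact (ih1 i' _ hx) hg1
            · exact ih2 _ _ x hne' hx (hia' ▸ h)
          · rw [Function.update_of_ne hia'] at hx'
            exact ih2 _ _ x hne' hx hx'
      · intro x
        rcases ih3 x with h | ⟨i', h⟩
        · by_cases hxg : x = itm k
          · right
            refine ⟨π.getD k i, ?_⟩
            rw [hR2, Function.update_self, hxg]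
            exact Finset.mem_insert_self _ _
          · left
            rw [hR1]
            exact Finset.mem_erase.mpr ⟨hxg, h⟩
        · right
          refine ⟨i', ?_⟩
          rw [hR2]
          by_cases hia : i' = π.getD k i
          · subst hia; rw [Function.update_self]; exact Finset.mem_insert_of_mem h
          · rw [Function.update_of_ne hia]; exact h
      · intro i'
        rw [hR2, Finset.range_add_one, Finset.filter_insert]
        by_cases hia : π.getD k i = i'
        · rw [if_pos hia, ← hia, Function.update_self]
          rw [Finset.sum_insert (fun h => (ih1 _ _ h) hg1),
            Finset.sum_insert (by simp)]
          congr 1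
          exact ih4 _
        · rw [if_neg hia, Function.update_of_ne (fun h => hia h.symm)]
          exact ih4 i'
  have hMst : ∀ i', allocate u π i' = (st m).2 i' := by
    intro i'
    unfold allocate
    rw [hstdef]
    simp only []
    rw [show π.take m = π by rw [← hlen, List.take_length]]
  have hRm : (st m).1 = ∅ := by
    rw [← Finset.card_eq_zero, hcard m le_rfl]
    omega
  -- counting
  set cnt : ℕ → ℕ := fun k => (π.take k).count i with hcntdef
  set s : ℕ := cnt m with hsdef
  set c' : ℝ := ((∑ i', w i') - w i) / w i with hc'def
  have hc'0 : 0 ≤ c' := by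
    rw [hc'def]
    apply div_nonneg _ (le_of_lt (hw i))
    linarith
  have hcntmono : Monotone cnt := count_take_mono π i
  have hcntstep : ∀ q, cnt q ≤ cnt (q+1) ∧ cnt (q+1) ≤ cnt q + 1 := by
    intro q
    rcases Nat.lt_or_ge q π.length with h | h
    · have := count_take_succ π q h i
      constructor <;> rw [hcntdef] <;> simp only [] <;> rw [this] <;> split_ifs <;> omega
    · have h1 : π.take q = π := List.take_of_length_le h
      have h2 : π.take (q+1) = π := List.take_of_length_le (by omega)
      constructor <;> rw [hcntdef] <;> simp only [] <;> rw [h1, h2] <;> omega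
  have hcnts : ∀ q, q < m → π.getD q i = i → cnt (q+1) = cnt q + 1 := by
    intro q hq hqi
    have hq' : q < π.length := by omega
    rw [hcntdef]
    simp only []
    rw [count_take_succ π q hq' i, hgd q hq', if_pos hqi]
  have hcnts' : ∀ q, q < m → π.getD q i ≠ i → cnt (q+1) = cnt q := by
    intro q hq hqi
    have hq' : q < π.length := by omega
    rw [hcntdef]
    simp only []
    rw [count_take_succ π q hq' i, hgd q hq', if_neg hqi]
    omega
  have hcntlt : ∀ q, q < m → π.getD q i = i → cnt q < s := by
    intro q hq hqi
    have h1 := hcnts q hq hqi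
    have h2 : cnt (q+1) ≤ s := hcntmono (by omega)
    omega
  have hF4 : ∀ k, k ≤ m → ∀ i', ((π.take k).count i' : ℝ) ≤
      w i' * ((cnt k : ℝ) + 1) / w i := by
    intro k
    induction k with
    | zero =>
      intro _ i'
      simp only [List.take_zero, List.count_nil, Nat.cast_zero]
      have h1 := hw i
      have h2 := hw i'
      positivity
    | succ k ih =>
      intro hk1 i'
      have hk : k < m := by omega
      have hk' : k < π.length := by omega
      have hcle : ((cnt k : ℝ)) ≤ ((cnt (k+1) : ℝ)) := by
        exact_mod_cast hcntmono (Nat.le_succ k)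
      have hrhs : w i' * ((cnt k : ℝ)+1)/w i ≤ w i' * ((cnt (k+1) : ℝ)+1)/w i := by
        apply (div_le_div_iff_of_pos_right (hw i)).mpr
        nlinarith [le_of_lt (hw i')]
      rw [count_take_succ π k hk' i']
      by_cases hki' : π.get ⟨k, hk'⟩ = i'
      · rw [if_pos hki']
        have hs0 := (hseq k hk' i).1
        rw [hki'] at hs0
        have hs : (((π.take k).count i' : ℝ) + 1)/w i' ≤ ((cnt k : ℝ)+1)/w i := hs0
        rw [div_le_div_iff₀ (hw i') (hw i)] at hs
        have h2 : ((π.take k).count i' : ℝ) + 1 ≤ w i' * ((cnt k : ℝ)+1)/w i := by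
          rw [le_div_iff₀ (hw i)]
          nlinarith [hs]
        push_cast
        calc ((π.take k).count i' : ℝ) + 1 ≤ w i' * ((cnt k : ℝ)+1)/w i := h2
        _ ≤ _ := hrhs
      · rw [if_neg hki']
        push_cast
        simp only [add_zero]
        exact le_trans (ih (by omega) i') hrhs
  have hF5 : ∀ k, k ≤ m → (k : ℝ) - cnt k ≤ ((cnt k : ℝ) + 1) * c' := by
    intro k hk
    have hsum : ∑ i' : Fin n, ((π.take k).count i' : ℝ) = k := by
      have h1 := sum_count_univ (π.take k)
      have hlen2 : (π.take k).length = k := by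
        rw [List.length_take]; omega
      rw [hlen2] at h1
      exact_mod_cast h1
    have hsplit : ∑ i' : Fin n, ((π.take k).count i' : ℝ)
        = ((π.take k).count i : ℝ) +
          ∑ i' ∈ Finset.univ.erase i, ((π.take k).count i' : ℝ) :=
      (Finset.add_sum_erase _ _ (Finset.mem_univ i)).symm
    have hbound : ∑ i' ∈ Finset.univ.erase i, ((π.take k).count i' : ℝ)
        ≤ ∑ i' ∈ Finset.univ.erase i, w i' * ((cnt k : ℝ)+1)/w i :=
      Finset.sum_le_sum (fun i' _ => hF4 k hk i')
    have hsum2 : ∑ i' ∈ Finset.univ.erase i, w i' * ((cnt k : ℝ)+1)/w i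
        = ((∑ i', w i') - w i) * ((cnt k : ℝ)+1)/w i := by
      rw [← Finset.sum_div, ← Finset.sum_mul]
      congr 2
      exact Finset.sum_erase_eq_sub (Finset.mem_univ i)
    have heq : ((∑ i', w i') - w i) * ((cnt k : ℝ)+1)/w i = ((cnt k : ℝ)+1)*c' := by
      rw [hc'def]; ring
    have hcnteq : ((π.take k).count i : ℝ) = (cnt k : ℝ) := rfl
    rw [hsplit, hcnteq] at hsum
    rw [hsum2, heq] at hbound
    linarith
  have hsing : ∀ j, j < s → ∃ T, T < m ∧ cnt T = j ∧ π.getD T i = i ∧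
      ((Finset.range m).filter (fun q => π.getD q i = i ∧ cnt q = j)) = {T} := by
    intro j hj
    have hcnt0 : cnt 0 = 0 := by rw [hcntdef]; simp
    obtain ⟨T, hTm, hTc, hTc1⟩ := cnt_hit cnt hcnt0 hcntstep m j hj
    have hTi : π.getD T i = i := by
      by_contra hcon
      have := hcnts' T hTm hcon
      omega
    refine ⟨T, hTm, hTc, hTi, ?_⟩
    ext q
    simp only [Finset.mem_filter, Finset.mem_range, Finset.mem_singleton]
    constructor
    · rintro ⟨hqm, hqi, hqc⟩
      by_contra hqT
      rcases lt_or_gt_of_ne hqT with h | h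
      · have h1 := hcnts q hqm hqi
        have h2 : cnt (q+1) ≤ cnt T := hcntmono (by omega)
        omega
      · have h2 : cnt (T+1) ≤ cnt q := hcntmono (by omega)
        omega
    · rintro rfl
      exact ⟨hTm, hTi, hTc⟩
  -- block values
  set b : ℕ → ℝ := fun j =>
    ∑ q ∈ (Finset.range m).filter (fun q => π.getD q i = i ∧ cnt q = j), val q with hbdef
  have hb0 : ∀ j, 0 ≤ b j := fun j => Finset.sum_nonneg (fun q _ => hval0 q)
  have hbz : ∀ j, s ≤ j → b j = 0 := by
    intro j hj
    have hempty : (Finset.range m).filter (fun q => π.getD q i = i ∧ cnt q = j) = ∅ := by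
      ext q
      simp only [Finset.mem_filter, Finset.mem_range, Finset.notMem_empty, iff_false, not_and]
      intro hqm hqi
      have := hcntlt q hqm hqi
      omega
    rw [hbdef]
    simp only []
    rw [hempty, Finset.sum_empty]
  have hbmono : ∀ j, b (j+1) ≤ b j := by
    intro j
    rcases Nat.lt_or_ge (j+1) s with h | h
    · obtain ⟨T, hTm, hTc, hTi, hTset⟩ := hsing j (by omega)
      obtain ⟨T', hTm', hTc', hTi', hTset'⟩ := hsing (j+1) h
      have h1 : b j = val T := by
        rw [hbdef]; simp only []; rw [hTset, Finset.sum_singleton]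
      have h2 : b (j+1) = val T' := by
        rw [hbdef]; simp only []; rw [hTset', Finset.sum_singleton]
      rw [h1, h2]
      have hTT' : T < T' := by
        by_contra hcon
        have : cnt T' ≤ cnt T := hcntmono (by omega)
        omega
      exact hval_le T T' hTT' hTm' hTi
    · rw [hbz (j+1) (by omega)]
      exact hb0 j
  set D : ℕ → ℝ := fun j => if j = 0 then β else min β (b (j-1)) with hDdef
  have hDmono : ∀ j, D (j+1) ≤ D j := by
    intro j
    rcases j with _ | j
    · rw [hDdef]
      simp only [if_neg one_ne_zero, if_pos rfl]
      exact min_le_left _ _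
    · rw [hDdef]
      simp only [if_neg (Nat.succ_ne_zero _), Nat.add_sub_cancel]
      exact min_le_min le_rfl (hbmono j)
  have hD0 : ∀ j, 0 ≤ D j := by
    intro j
    rw [hDdef]
    simp only []
    split_ifs
    · exact hβ0
    · exact le_min hβ0 (hb0 _)
  have hitmO : ∀ q, q < m → π.getD q i ≠ i → itm q ∈ Finset.univ \ allocate u π i := by
    intro q hq hqi
    have h1 : itm q ∈ (st (q+1)).2 (π.getD q i) := by
      rw [(hspec q hq).2.2.2, Function.update_self]
      exact Finset.mem_insert_self _ _
    have h2 : itm q ∈ (st m).2 (π.getD q i) := hMmono _ (q+1) m (by omega) le_rfl h1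
    have h3 : itm q ∉ (st m).2 i := (hP m le_rfl).2.1 _ _ _ hqi h2
    rw [Finset.mem_sdiff]
    refine ⟨Finset.mem_univ _, ?_⟩
    rw [hMst i]
    exact h3
  have hvalD : ∀ q, q < m → π.getD q i ≠ i → val q ≤ D (cnt q) := by
    intro q hq hqi
    have hβle : val q ≤ β := hbsmax (itm q) (hitmO q hq hqi)
    rcases Nat.eq_zero_or_pos (cnt q) with h0 | hpos
    · rw [h0, hDdef]
      simp only [if_pos rfl]
      exact hβle
    · obtain ⟨j, hj⟩ : ∃ j, cnt q = j + 1 := ⟨cnt q - 1, by omega⟩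
      rw [hj, hDdef]
      simp only [if_neg (Nat.succ_ne_zero _), Nat.add_sub_cancel]
      apply le_min hβle
      have hjs : j < s := by
        have h1 : cnt q ≤ s := hcntmono (le_of_lt hq)
        omega
      obtain ⟨T, hTm, hTc, hTi, hTset⟩ := hsing j hjs
      have h1 : b j = val T := by
        rw [hbdef]; simp only []; rw [hTset, Finset.sum_singleton]
      rw [h1]
      have hTq : T < q := by
        by_contra hcon
        have : cnt q ≤ cnt T := hcntmono (by omega)
        omega
      exact hval_le T q hTq hq hTi
  -- the two parts of items
  set Pset : Finset ℕ := (Finset.range m).filter (fun q => π.getD q i = i) with hPsetdef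
  set Oset : Finset ℕ := (Finset.range m).filter (fun q => ¬ (π.getD q i = i)) with hOsetdef
  set a : ℕ → ℝ := fun j => ((Oset.filter (fun q => cnt q = j)).card : ℝ) with hadef
  have hAcard : ∀ K : ℕ, ∑ j ∈ Finset.range K, a j =
      ((Oset.filter (fun q => cnt q < K)).card : ℝ) := by
    intro K
    have hnat : ∑ j ∈ Finset.range K, (Oset.filter (fun q => cnt q = j)).card
        = (Oset.filter (fun q => cnt q < K)).card := by
      induction K with
      | zero => simp
      | succ K ih =>
        rw [Finset.sum_range_succ, ih]
        have hsplit : Oset.filter (fun q => cnt q < K+1)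
            = Oset.filter (fun q => cnt q < K) ∪ Oset.filter (fun q => cnt q = K) := by
          ext q
          simp only [Finset.mem_filter, Finset.mem_union]
          constructor
          · rintro ⟨h1, h2⟩
            rcases Nat.lt_succ_iff_lt_or_eq.mp h2 with h | h
            · exact Or.inl ⟨h1, h⟩
            · exact Or.inr ⟨h1, h⟩
          · rintro (⟨h1, h2⟩ | ⟨h1, h2⟩)
            · exact ⟨h1, by omega⟩
            · exact ⟨h1, by omega⟩
        rw [hsplit, Finset.card_union_of_disjoint]
        rw [Finset.disjoint_left]
        intro q hq hq'
        simp only [Finset.mem_filter] at hq hq'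
        omega
    rw [hadef]
    simp only []
    rw [← Nat.cast_sum, hnat]
  have hA : ∀ K : ℕ, ∑ j ∈ Finset.range K, a j ≤ (K : ℝ) * c' := by
    intro K
    rw [hAcard K]
    rcases Nat.eq_zero_or_pos K with h0 | hK
    · subst h0
      have : Oset.filter (fun q => cnt q < 0) = ∅ := by
        ext q; simp
      rw [this]
      simp
    · have hcntTlen : ∀ T, T ≤ m → cnt T ≤ T := by
        intro T hT
        have h1 : (π.take T).count i ≤ (π.take T).length := List.count_le_length
        have h2 : (π.take T).length = T := by rw [List.length_take]; omega
        rw [hcntdef]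
        simp only []
        omega
      rcases Nat.lt_or_ge (K-1) s with hKs | hKs
      · obtain ⟨T, hTm, hTc, hTi, _⟩ := hsing (K-1) hKs
        have hsub : Oset.filter (fun q => cnt q < K) ⊆
            (Finset.range T).filter (fun q => ¬(π.getD q i = i)) := by
          intro q hq
          simp only [hOsetdef, Finset.mem_filter, Finset.mem_range, Finset.filter_filter] at hq ⊢
          obtain ⟨hqm, hqi, hqc⟩ := hq
          refine ⟨?_, hqi⟩
          by_contra hcon
          push_neg at hcon
          rcases eq_or_lt_of_le hcon with h | h
          · exact hqi (h ▸ hTi)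
          · have h1 := hcnts T hTm hTi
            have h2 : cnt (T+1) ≤ cnt q := hcntmono h
            omega
        have hcard2 : ((Finset.range T).filter (fun q => ¬(π.getD q i = i))).card
            = T - cnt T := by
          have h1 : ((Finset.range T).filter (fun q => π.getD q i = i)).card = cnt T :=
            (count_take_eq_card_filter π i i T (by omega)).symm
          have h2 := Finset.card_filter_add_card_filter_not
            (s := Finset.range T) (p := fun q => π.getD q i = i)
          rw [Finset.card_range] at h2
          omega
        have hle := Finset.card_le_card hsub
        rw [hcard2] at hle
        have hF5T := hF5 T (by omega)
        have hcT : cnt T ≤ T := hcntTlen T (by omega)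
        have hstep1 : ((Oset.filter (fun q => cnt q < K)).card : ℝ) ≤ (T : ℝ) - (cnt T : ℝ) := by
          calc ((Oset.filter (fun q => cnt q < K)).card : ℝ)
              ≤ ((T - cnt T : ℕ) : ℝ) := by exact_mod_cast hle
          _ = (T : ℝ) - (cnt T : ℝ) := by
            rw [Nat.cast_sub hcT]
        have hKeq : ((cnt T : ℝ) + 1) = (K : ℝ) := by
          rw [hTc, Nat.cast_sub hK]
          push_cast
          ring
        calc ((Oset.filter (fun q => cnt q < K)).card : ℝ)
            ≤ (T : ℝ) - (cnt T : ℝ) := hstep1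
        _ ≤ ((cnt T : ℝ) + 1) * c' := hF5T
        _ = (K : ℝ) * c' := by rw [hKeq]
      · have hsub : Oset.filter (fun q => cnt q < K) ⊆ Oset := Finset.filter_subset _ _
        have hOcard : Oset.card = m - s := by
          have h1 : ((Finset.range m).filter (fun q => π.getD q i = i)).card = s :=
            (count_take_eq_card_filter π i i m (by omega)).symm
          have h2 := Finset.card_filter_add_card_filter_not
            (s := Finset.range m) (p := fun q => π.getD q i = i)
          rw [Finset.card_range] at h2
          rw [hOsetdef]
          omega
        have hsm : s ≤ m := hcntTlen m le_rfl
        have hF5m := hF5 m le_rfl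
        have hle := Finset.card_le_card hsub
        rw [hOcard] at hle
        have hsK : (s : ℝ) + 1 ≤ (K : ℝ) := by
          have : s + 1 ≤ K := by omega
          exact_mod_cast this
        calc ((Oset.filter (fun q => cnt q < K)).card : ℝ)
            ≤ ((m - s : ℕ) : ℝ) := by exact_mod_cast hle
        _ = (m : ℝ) - (s : ℝ) := by rw [Nat.cast_sub hsm]
        _ ≤ ((s : ℝ) + 1) * c' := hF5m
        _ ≤ (K : ℝ) * c' := mul_le_mul_of_nonneg_right hsK hc'0
  have hbsum : ∑ j ∈ Finset.range s, b j = ∑ q ∈ Pset, val q := by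
    have hmaps : ∀ q ∈ Pset, cnt q ∈ Finset.range s := by
      intro q hq
      simp only [hPsetdef, Finset.mem_filter, Finset.mem_range] at hq
      exact Finset.mem_range.mpr (hcntlt q hq.1 hq.2)
    have h1 := Finset.sum_fiberwise_of_maps_to hmaps val
    rw [← h1]
    apply Finset.sum_congr rfl
    intro j _
    rw [hbdef]
    simp only []
    rw [hPsetdef, Finset.filter_filter]
  have hOsum : ∑ q ∈ Oset, val q ≤ c' * (β + ∑ q ∈ Pset, val q) := by
    have hmemO : ∀ q ∈ Oset, q < m ∧ π.getD q i ≠ i := by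
      intro q hq
      simp only [hOsetdef, Finset.mem_filter, Finset.mem_range] at hq
      exact ⟨hq.1, hq.2⟩
    have hstep1 : ∑ q ∈ Oset, val q ≤ ∑ q ∈ Oset, D (cnt q) :=
      Finset.sum_le_sum (fun q hq => hvalD q (hmemO q hq).1 (hmemO q hq).2)
    have hmaps : ∀ q ∈ Oset, cnt q ∈ Finset.range (s+1) := by
      intro q hq
      have h1 : cnt q ≤ s := hcntmono (le_of_lt (hmemO q hq).1)
      exact Finset.mem_range.mpr (by omega)
    have hstep2 : ∑ q ∈ Oset, D (cnt q)
        = ∑ j ∈ Finset.range (s+1), a j * D j := by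
      rw [← Finset.sum_fiberwise_of_maps_to hmaps (fun q => D (cnt q))]
      apply Finset.sum_congr rfl
      intro j _
      have hinner : ∑ q ∈ Oset.filter (fun q => cnt q = j), D (cnt q)
          = ∑ q ∈ Oset.filter (fun q => cnt q = j), D j :=
        Finset.sum_congr rfl (fun q hq => by
          rw [(Finset.mem_filter.mp hq).2])
      rw [hinner, Finset.sum_const, nsmul_eq_mul, hadef]
    have hstep3 : ∑ j ∈ Finset.range (s+1), a j * D j
        ≤ c' * ∑ j ∈ Finset.range (s+1), D j :=
      abel_bound D a c' hDmono hD0 hA (s+1)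
    have hstep4 : ∑ j ∈ Finset.range (s+1), D j ≤ β + ∑ q ∈ Pset, val q := by
      rw [Finset.sum_range_succ' D s]
      have hD0' : D 0 = β := by simp [hDdef]
      have hterm : ∀ j, D (j+1) = min β (b j) := by
        intro j
        rw [hDdef]
        simp only [if_neg (Nat.succ_ne_zero _), Nat.add_sub_cancel]
      have h2 : ∑ j ∈ Finset.range s, D (j+1) ≤ ∑ j ∈ Finset.range s, b j :=
        Finset.sum_le_sum (fun j _ => by rw [hterm j]; exact min_le_right _ _)
      rw [hD0', hbsum] at *
      linarith [h2]
    calc ∑ q ∈ Oset, val q ≤ ∑ q ∈ Oset, D (cnt q) := hstep1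
    _ = ∑ j ∈ Finset.range (s+1), a j * D j := hstep2
    _ ≤ c' * ∑ j ∈ Finset.range (s+1), D j := hstep3
    _ ≤ c' * (β + ∑ q ∈ Pset, val q) := mul_le_mul_of_nonneg_left hstep4 hc'0
  have hU : ∑ x, u i x = ∑ q ∈ Pset, val q + ∑ q ∈ Oset, val q := by
    have hcover : (Finset.univ : Finset (Fin m))
        = Finset.univ.biUnion (fun i' => (st m).2 i') := by
      ext x
      simp only [Finset.mem_univ, true_iff, Finset.mem_biUnion]
      rcases (hP m le_rfl).2.2.1 x with h | ⟨i', h⟩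
      · rw [hRm] at h
        exact absurd h (Finset.notMem_empty x)
      · exact ⟨i', trivial, h⟩
    have hdisj : ((Finset.univ : Finset (Fin n)) : Set (Fin n)).PairwiseDisjoint
        (fun i' => (st m).2 i') := by
      intro i' _ i'' _ hne'
      simp only [Function.onFun]
      rw [Finset.disjoint_left]
      intro x hx hx'
      exact (hP m le_rfl).2.1 i' i'' x hne' hx hx'
    calc ∑ x, u i x = ∑ x ∈ Finset.univ.biUnion (fun i' => (st m).2 i'), u i x := by
          rw [← hcover]
    _ = ∑ i', ∑ x ∈ (st m).2 i', u i x := Finset.sum_biUnion hdisj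
    _ = ∑ i', ∑ q ∈ (Finset.range m).filter (fun q => π.getD q i = i'), val q :=
        Finset.sum_congr rfl (fun i' _ => (hP m le_rfl).2.2.2 i')
    _ = ∑ q ∈ Finset.range m, val q :=
        Finset.sum_fiberwise_of_maps_to (fun q _ => Finset.mem_univ _) val
    _ = ∑ q ∈ Pset, val q + ∑ q ∈ Oset, val q := by
        rw [hPsetdef, hOsetdef]
        exact (Finset.sum_filter_add_sum_filter_not _ _ _).symm
  have hSi : ∑ x ∈ allocate u π i, u i x = ∑ q ∈ Pset, val q := by
    rw [hMst i, hPsetdef]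
    exact (hP m le_rfl).2.2.2 i
  -- conclusion
  refine ⟨{bs}, Finset.singleton_subset_iff.mpr hbsO, by simp, ?_⟩
  rw [Finset.sum_singleton, hSi, hU, ← hβdef]
  set SP := ∑ q ∈ Pset, val q with hSPdef
  set SO := ∑ q ∈ Oset, val q with hSOdef
  have hSP0 : 0 ≤ SP := Finset.sum_nonneg (fun q _ => hval0 q)
  have hwc' : w i * c' = (∑ i', w i') - w i := by
    rw [hc'def, mul_div_cancel₀ _ (ne_of_gt (hw i))]
  have hkey : w i * (SP + SO) ≤ (∑ i', w i') * (SP + β) := by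
    have h1 : w i * SO ≤ w i * (c' * (β + SP)) :=
      mul_le_mul_of_nonneg_left hOsum (le_of_lt (hw i))
    have h2 : w i * (c' * (β + SP)) = ((∑ i', w i') - w i) * (β + SP) := by
      rw [← mul_assoc, hwc']
    nlinarith [hβ0, hSP0, hwiW]
  have h3 : w i / (∑ i', w i') * (SP + SO) ≤ SP + β := by
    rw [div_mul_eq_mul_div, div_le_iff₀ hWsum]
    nlinarith [hkey]
  linarith


/-- Among all divisor methods, Jefferson's method (`f t = t + 1`) is
the only one satisfying WPROP1: a divisor method with function `f` produces a WPROP1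
allocation for every instance if and only if `f t = t + 1` for all `t`. -/
theorem jefferson_unique_WPROP1 (f : ℕ → ℝ) (hf : IsDivisorFn f) :
    (∀ (n m : ℕ) (w : Fin n → ℝ), (∀ i, 0 < w i) →
      ∀ π : List (Fin n), π.length = m → IsDivisorSeq f w π →
      ∀ u : Fin n → Fin m → ℝ, (∀ i j, 0 ≤ u i j) →
        isWPROP1 w u (allocate u π)) ↔
      ∀ t : ℕ, f t = t + 1 := by
  constructor
  · intro H
    exact forward_dir hf H
  · intro hJ n m w hw π hlen hseq u hu
    have hfeq : f = fun t : ℕ => (t : ℝ) + 1 := funext hJ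
    rw [hfeq] at hseq
    exact jefferson_WPROP1 w hw π hlen hseq u hu
end

section
/- The quota method does not satisfy population-monotonicity: there exist an instance (agents with weights and additive utilities over a set of items) and an additional agent with a weight and utilities such that some original agent receives strictly more utility from the allocation produced by the quota method after the new agent is added than before. In addition, the quota method does not satisfy weight-monotonicity even with three agents: there exist an instance with three agents and an increase of agent 1's weight such that agent 1 receives strictly less utility from the allocation produced by the quota method with the increased weight than with the original weight. -/
open Finset

/-- `π` is the picking sequence induced by the quota method with weights `w`:
in round `k+1` (0-indexed position `k`), among the eligible agents
(those with `t_i < w_i·(k+1)/Σ w`), the pick goes to an agent minimizing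
`(t_i + 1)/w_i`, ties broken toward lower-numbered agents. -/
def IsQuotaSeq {n : ℕ} (w : Fin n → ℝ) (π : List (Fin n)) : Prop :=
  ∀ (k : ℕ) (hk : k < π.length),
    (((π.take k).count (π.get ⟨k, hk⟩) : ℝ) <
        w (π.get ⟨k, hk⟩) * (k + 1) / ∑ i', w i') ∧
    ∀ i : Fin n, ((π.take k).count i : ℝ) < w i * (k + 1) / ∑ i', w i' →
      (((π.take k).count (π.get ⟨k, hk⟩) : ℝ) + 1) / w (π.get ⟨k, hk⟩) ≤
          (((π.take k).count i : ℝ) + 1) / w i ∧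
      (i < π.get ⟨k, hk⟩ →
        (((π.take k).count (π.get ⟨k, hk⟩) : ℝ) + 1) / w (π.get ⟨k, hk⟩) <
          (((π.take k).count i : ℝ) + 1) / w i)

/-! ### Auxiliary computable versions -/

def favoriteN {m : ℕ} (v : Fin m → ℕ) (R : Finset (Fin m)) : Option (Fin m) :=
  if h : (R.filter fun j => ∀ j' ∈ R, v j' ≤ v j).Nonempty then
    some ((R.filter fun j => ∀ j' ∈ R, v j' ≤ v j).min' h)
  else none

def pickStepN {n m : ℕ} (v : Fin n → Fin m → ℕ)
    (st : Finset (Fin m) × (Fin n → Finset (Fin m))) (a : Fin n) :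
    Finset (Fin m) × (Fin n → Finset (Fin m)) :=
  match favoriteN (v a) st.1 with
  | none => st
  | some j => (st.1.erase j, Function.update st.2 a (insert j (st.2 a)))

def allocateN {n m : ℕ} (v : Fin n → Fin m → ℕ) (π : List (Fin n)) :
    Fin n → Finset (Fin m) :=
  (π.foldl (pickStepN v) (Finset.univ, fun _ => ∅)).2

lemma favorite_cast {m : ℕ} (v : Fin m → ℕ) (R : Finset (Fin m)) :
    favorite (fun j => (v j : ℝ)) R = favoriteN v R := by
  unfold favorite favoriteN
  have h : (R.filter fun j => ∀ j' ∈ R, ((v j' : ℝ) ≤ (v j : ℝ)))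
      = R.filter fun j => ∀ j' ∈ R, v j' ≤ v j := by
    apply Finset.filter_congr
    intro j _
    simp [Nat.cast_le]
  simp only [h]

lemma pickStep_cast {n m : ℕ} (v : Fin n → Fin m → ℕ)
    (st : Finset (Fin m) × (Fin n → Finset (Fin m))) (a : Fin n) :
    pickStep (fun a j => (v a j : ℝ)) st a = pickStepN v st a := by
  unfold pickStep pickStepN
  simp only [favorite_cast]

lemma allocate_cast {n m : ℕ} (v : Fin n → Fin m → ℕ) (π : List (Fin n)) :
    allocate (fun a j => (v a j : ℝ)) π = allocateN v π := by
  unfold allocate allocateN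
  have h : ∀ (l : List (Fin n)) st,
      l.foldl (pickStep (fun a j => ((v a j : ℕ) : ℝ))) st = l.foldl (pickStepN v) st := by
    intro l
    induction l with
    | nil => intro st; rfl
    | cons a l ih => intro st; rw [List.foldl_cons, List.foldl_cons, pickStep_cast, ih]
  rw [h]

def quotaCheck {n : ℕ} (wN : Fin n → ℕ) (π : List (Fin n)) : Prop :=
  ∀ (k : ℕ) (hk : k < π.length),
    ((π.take k).count (π.get ⟨k, hk⟩) * ∑ i', wN i' < wN (π.get ⟨k, hk⟩) * (k + 1)) ∧
    ∀ i : Fin n, (π.take k).count i * ∑ i', wN i' < wN i * (k + 1) →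
      (((π.take k).count (π.get ⟨k, hk⟩) + 1) * wN i ≤
          ((π.take k).count i + 1) * wN (π.get ⟨k, hk⟩)) ∧
      (i < π.get ⟨k, hk⟩ →
        ((π.take k).count (π.get ⟨k, hk⟩) + 1) * wN i <
          ((π.take k).count i + 1) * wN (π.get ⟨k, hk⟩))

instance {n : ℕ} (wN : Fin n → ℕ) (π : List (Fin n)) : Decidable (quotaCheck wN π) := by
  unfold quotaCheck; infer_instance

lemma isQuotaSeq_of_check {n : ℕ} (wN : Fin n → ℕ) (hw : ∀ i, 0 < wN i)
    (π : List (Fin n)) (h : quotaCheck wN π) :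
    IsQuotaSeq (fun j => (wN j : ℝ)) π := by
  intro k hk
  obtain ⟨h1, h2⟩ := h k hk
  have hWn : 0 < ∑ i', wN i' :=
    Finset.sum_pos (fun i _ => hw i) ⟨π.get ⟨k, hk⟩, mem_univ _⟩
  have hW : (0 : ℝ) < ∑ i', ((wN i' : ℕ) : ℝ) := by
    rw [← Nat.cast_sum]; exact_mod_cast hWn
  constructor
  · rw [lt_div_iff₀ hW, ← Nat.cast_sum]
    beta_reduce
    exact_mod_cast h1
  · intro i hi
    have hi' : (π.take k).count i * ∑ i', wN i' < wN i * (k + 1) := by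
      rw [lt_div_iff₀ hW, ← Nat.cast_sum] at hi
      beta_reduce at hi
      exact_mod_cast hi
    obtain ⟨ha, hb⟩ := h2 i hi'
    have hg : (0 : ℝ) < (wN (π.get ⟨k, hk⟩) : ℝ) := by exact_mod_cast hw _
    have hip : (0 : ℝ) < (wN i : ℝ) := by exact_mod_cast hw i
    constructor
    · rw [div_le_div_iff₀ hg hip]
      exact_mod_cast ha
    · intro hlt
      rw [div_lt_div_iff₀ hg hip]
      exact_mod_cast hb hlt

/-- The quota method does not satisfy population-monotonicity:
there is an instance where adding an extra agent strictly increases the utility of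
an original agent. Moreover, the quota method does not satisfy weight-monotonicity
even with three agents: there is an instance with three agents where increasing
agent 1's weight strictly decreases agent 1's utility. -/
theorem quota_not_population_monotone_and_not_weight_monotone :
    (∃ (n m : ℕ) (w : Fin (n + 1) → ℝ) (u : Fin (n + 1) → Fin m → ℝ)
       (π : List (Fin n)) (π' : List (Fin (n + 1))) (i : Fin n),
       (∀ j, 0 < w j) ∧ (∀ a b, 0 ≤ u a b) ∧
       π.length = m ∧ π'.length = m ∧
       IsQuotaSeq (fun j : Fin n => w j.castSucc) π ∧ IsQuotaSeq w π' ∧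
       (∑ x ∈ allocate (fun a y => u a.castSucc y) π i, u i.castSucc x) <
         ∑ x ∈ allocate u π' i.castSucc, u i.castSucc x) ∧
    (∃ (m : ℕ) (w w' : Fin 3 → ℝ) (u : Fin 3 → Fin m → ℝ) (π π' : List (Fin 3)),
       (∀ j, 0 < w j) ∧ w 0 < w' 0 ∧ w' 1 = w 1 ∧ w' 2 = w 2 ∧
       (∀ a b, 0 ≤ u a b) ∧
       π.length = m ∧ π'.length = m ∧
       IsQuotaSeq w π ∧ IsQuotaSeq w' π' ∧
       (∑ x ∈ allocate u π' 0, u 0 x) < ∑ x ∈ allocate u π 0, u 0 x) := by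
  constructor
  · -- population monotonicity counterexample: n = 2, m = 3, weights (1,4) + new agent 1
    refine ⟨2, 3, fun j => ((![1, 4, 1] : Fin 3 → ℕ) j : ℝ),
      fun a b => ((![![1,1,1], ![0,0,0], ![0,0,0]] : Fin 3 → Fin 3 → ℕ) a b : ℝ),
      [1, 1, 1], [1, 1, 0], 0, ?_, ?_, rfl, rfl, ?_, ?_, ?_⟩
    · intro j; fin_cases j <;> norm_num
    · intro a b; positivity
    · exact isQuotaSeq_of_check (fun j => (![1, 4, 1] : Fin 3 → ℕ) j.castSucc)
        (by intro i; fin_cases i <;> norm_num) _ (by decide)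
    · exact isQuotaSeq_of_check ![1, 4, 1] (by intro i; fin_cases i <;> norm_num) _ (by decide)
    · rw [show (fun (a : Fin 2) (y : Fin 3) =>
          (((![![1,1,1], ![0,0,0], ![0,0,0]] : Fin 3 → Fin 3 → ℕ) a.castSucc y : ℕ) : ℝ))
          = fun a y => (((fun (a : Fin 2) y => (![![1,1,1], ![0,0,0], ![0,0,0]] : Fin 3 → Fin 3 → ℕ) a.castSucc y) a y : ℕ) : ℝ) from rfl]
      rw [allocate_cast, allocate_cast]
      rw [← Nat.cast_sum, ← Nat.cast_sum, Nat.cast_lt]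
      decide
  · -- weight monotonicity counterexample: m = 5, weights (4,2,2) → (5,2,2)
    refine ⟨5, fun j => ((![4, 2, 2] : Fin 3 → ℕ) j : ℝ),
      fun j => ((![5, 2, 2] : Fin 3 → ℕ) j : ℝ),
      fun a b => ((![![0,1,1,1,1], ![0,0,1,0,1], ![0,0,0,1,0]] : Fin 3 → Fin 5 → ℕ) a b : ℝ),
      [0, 1, 0, 2, 0], [0, 0, 1, 2, 0], ?_, ?_, ?_, ?_, ?_, rfl, rfl, ?_, ?_, ?_⟩
    · intro j; fin_cases j <;> norm_num
    · norm_num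
    · norm_num
    · norm_num; rfl
    · intro a b; positivity
    · exact isQuotaSeq_of_check ![4, 2, 2] (by intro i; fin_cases i <;> norm_num) _ (by decide)
    · exact isQuotaSeq_of_check ![5, 2, 2] (by intro i; fin_cases i <;> norm_num) _ (by decide)
    · rw [allocate_cast, allocate_cast, ← Nat.cast_sum, ← Nat.cast_sum, Nat.cast_lt]
      decide +kernel
end

section
/- When there are two agents, the quota method satisfies weight-consistency and weight-monotonicity: for any number of items m, any weights (w_1, w_2), and any w_1' > w_1, the quota picking sequence for weights (w_1', w_2) can be obtained from the quota picking sequence for weights (w_1, w_2) by moving some of agent 1's picks earlier, inserting occurrences of agent 1 in some positions, and trimming the suffix of the resulting sequence so that it has length m; consequently, for any additive utilities, agent 1's utility from the allocation produced by the quota method does not decrease when her weight increases. -/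
open Finset

namespace QAux
variable {m : ℕ}

/-- `j` weakly dominates every element of `T` for value function `v` with index tiebreak. -/
def DomV (v : Fin m → ℝ) (j : Fin m) (T : Finset (Fin m)) : Prop :=
  ∀ r ∈ T, v r ≤ v j ∧ (v r = v j → j ≤ r)

lemma DomV.mono {v : Fin m → ℝ} {j : Fin m} {T T' : Finset (Fin m)}
    (h : T' ⊆ T) (hd : DomV v j T) : DomV v j T' := fun r hr => hd r (h hr)

lemma DomV.le {v : Fin m → ℝ} {j : Fin m} {T : Finset (Fin m)} (hd : DomV v j T)
    {r : Fin m} (hr : r ∈ T) : v r ≤ v j := (hd r hr).1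

lemma favorite_eq_some {v : Fin m → ℝ} {R : Finset (Fin m)} {j : Fin m}
    (hj : j ∈ R) (hd : DomV v j (R.erase j)) : favorite v R = some j := by
  have hmax : ∀ r ∈ R, v r ≤ v j := by
    intro r hr
    rcases eq_or_ne r j with rfl | hne
    · exact le_refl _
    · exact (hd r (Finset.mem_erase.2 ⟨hne, hr⟩)).1
  have hjF : j ∈ R.filter fun j0 => ∀ j' ∈ R, v j' ≤ v j0 :=
    Finset.mem_filter.2 ⟨hj, hmax⟩
  have hne : (R.filter fun j0 => ∀ j' ∈ R, v j' ≤ v j0).Nonempty := ⟨j, hjF⟩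
  rw [favorite, dif_pos hne]
  congr 1
  refine le_antisymm (Finset.min'_le _ _ hjF) ?_
  have hm := Finset.min'_mem _ hne
  rw [Finset.mem_filter] at hm
  set r := (R.filter fun j0 => ∀ j' ∈ R, v j' ≤ v j0).min' hne with hrdef
  rcases eq_or_ne r j with h | h
  · exact le_of_eq h.symm
  · exact (hd r (Finset.mem_erase.2 ⟨h, hm.1⟩)).2 (le_antisymm (hmax r hm.1) (hm.2 j hj))

lemma favorite_spec {v : Fin m → ℝ} {R : Finset (Fin m)} {j : Fin m}
    (h : favorite v R = some j) : j ∈ R ∧ DomV v j R := by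
  rw [favorite] at h
  split_ifs at h with hne
  have hj := Finset.min'_mem _ hne
  rw [Option.some_inj] at h
  rw [h] at hj
  rw [Finset.mem_filter] at hj
  refine ⟨hj.1, ?_⟩
  intro r hr
  refine ⟨hj.2 r hr, ?_⟩
  intro hv
  have hrF : r ∈ R.filter fun j0 => ∀ j' ∈ R, v j' ≤ v j0 := by
    refine Finset.mem_filter.2 ⟨hr, ?_⟩
    intro j' hj'
    rw [hv]; exact hj.2 j' hj'
  rw [← h]
  exact Finset.min'_le _ _ hrF

lemma favorite_isSome {v : Fin m → ℝ} {R : Finset (Fin m)} (h : R.Nonempty) :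
    ∃ j, favorite v R = some j := by
  obtain ⟨b, hb, hmax⟩ := Finset.exists_max_image R v h
  have : (R.filter fun j0 => ∀ j' ∈ R, v j' ≤ v j0).Nonempty :=
    ⟨b, Finset.mem_filter.2 ⟨hb, hmax⟩⟩
  exact ⟨_, by rw [favorite, dif_pos this]⟩

lemma favorite_eq_none {v : Fin m → ℝ} {R : Finset (Fin m)} (h : favorite v R = none) :
    R = ∅ := by
  by_contra hne
  obtain ⟨j, hj⟩ := favorite_isSome (v := v) (Finset.nonempty_iff_ne_empty.2 hne)
  rw [h] at hj; simp at hj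

end QAux

namespace QAux
variable {m : ℕ}

abbrev St (m : ℕ) := Finset (Fin m) × (Fin 2 → Finset (Fin m))

noncomputable def Sval (u : Fin 2 → Fin m → ℝ) (st : St m) : ℝ := ∑ x ∈ st.2 0, u 0 x

def GoodSt (st : St m) : Prop := ∀ j ∈ st.2 0, j ∉ st.1

lemma pickStep_of_none {u : Fin 2 → Fin m → ℝ} {st : St m} {a : Fin 2}
    (h : favorite (u a) st.1 = none) : pickStep u st a = st := by
  rw [pickStep, h]

lemma pickStep_of_some {u : Fin 2 → Fin m → ℝ} {st : St m} {a : Fin 2} {j : Fin m}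
    (h : favorite (u a) st.1 = some j) :
    pickStep u st a = (st.1.erase j, Function.update st.2 a (insert j (st.2 a))) := by
  rw [pickStep, h]

lemma good_pickStep {u : Fin 2 → Fin m → ℝ} {st : St m} (hg : GoodSt st) (a : Fin 2) :
    GoodSt (pickStep u st a) := by
  cases hfa : favorite (u a) st.1 with
  | none => rw [pickStep_of_none hfa]; exact hg
  | some j =>
    rw [pickStep_of_some hfa]
    intro r hr
    dsimp only at hr ⊢
    rcases eq_or_ne a 0 with rfl | ha
    · rw [Function.update_self] at hr
      rcases Finset.mem_insert.1 hr with rfl | hr'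
      · exact Finset.notMem_erase r _
      · intro hmem
        exact hg r hr' (Finset.mem_of_mem_erase hmem)
    · rw [Function.update_of_ne (by omega : (0:Fin 2) ≠ a)] at hr
      intro hmem
      exact hg r hr (Finset.mem_of_mem_erase hmem)

lemma sval_pickStep_zero {u : Fin 2 → Fin m → ℝ} {st : St m} {j : Fin m}
    (hg : GoodSt st) (h : favorite (u 0) st.1 = some j) :
    Sval u (pickStep u st 0) = Sval u st + u 0 j := by
  rw [pickStep_of_some h]
  have hj : j ∈ st.1 := (favorite_spec h).1
  have hnot : j ∉ st.2 0 := fun hc => hg j hc hj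
  simp only [Sval, Function.update_self]
  rw [Finset.sum_insert hnot]
  ring

lemma sval_pickStep_one {u : Fin 2 → Fin m → ℝ} {st : St m} :
    Sval u (pickStep u st 1) = Sval u st := by
  cases hfa : favorite (u 1) st.1 with
  | none => rw [pickStep_of_none hfa]
  | some j =>
    rw [pickStep_of_some hfa]
    simp only [Sval]
    rw [Function.update_of_ne (by omega : (0:Fin 2) ≠ 1)]


lemma fin2 (a : Fin 2) : a = 0 ∨ a = 1 := by
  fin_cases a
  · exact Or.inl rfl
  · exact Or.inr rfl

def Rel (u : Fin 2 → Fin m → ℝ) (st st' : St m) : Prop :=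
  GoodSt st ∧ GoodSt st' ∧ Sval u st ≤ Sval u st' ∧
  (st'.1 = st.1 ∨
   ∃ p q, p ∈ st.1 ∧ q ∉ st.1 ∧ st'.1 = insert q (st.1.erase p) ∧
     DomV (u 0) q st.1 ∧ DomV (u 1) p st'.1)

lemma rel_step {u : Fin 2 → Fin m → ℝ} {st st' : St m} (h : Rel u st st') (a : Fin 2) :
    Rel u (pickStep u st a) (pickStep u st' a) := by
  obtain ⟨hg, hg', hS, hshape⟩ := h
  have hgn := good_pickStep (u := u) hg a
  have hgn' := good_pickStep (u := u) hg' a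
  rcases hshape with heq | ⟨p, q, hp, hq, hR', hd0, hd1⟩
  · -- equal remaining sets
    cases hfa : favorite (u a) st.1 with
    | none =>
      have hfa' : favorite (u a) st'.1 = none := by rw [heq]; exact hfa
      rw [pickStep_of_none hfa, pickStep_of_none hfa']
      exact ⟨hg, hg', hS, Or.inl heq⟩
    | some j =>
      have hfa' : favorite (u a) st'.1 = some j := by rw [heq]; exact hfa
      refine ⟨hgn, hgn', ?_, Or.inl ?_⟩
      · rcases fin2 a with rfl | rfl
        · rw [sval_pickStep_zero hg hfa, sval_pickStep_zero hg' hfa']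
          linarith
        · rw [sval_pickStep_one, sval_pickStep_one]; exact hS
      · rw [pickStep_of_some hfa, pickStep_of_some hfa']
        dsimp only
        rw [heq]
  · have hqR' : q ∈ st'.1 := by rw [hR']; exact Finset.mem_insert_self _ _
    have hqnotRp : q ∉ st.1.erase p := fun hc => hq (Finset.mem_of_mem_erase hc)
    have hRp : st'.1.erase q = st.1.erase p := by
      rw [hR']; exact Finset.erase_insert hqnotRp
    have hsub' : st.1.erase p ⊆ st'.1 := by rw [hR']; exact Finset.subset_insert _ _
    rcases fin2 a with rfl | rfl
    · -- agent 0 moves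
      obtain ⟨x, hx⟩ := favorite_isSome (v := u 0) (R := st.1) ⟨p, hp⟩
      obtain ⟨hxR, hdx⟩ := favorite_spec hx
      have hfq : favorite (u 0) st'.1 = some q :=
        favorite_eq_some hqR' (by rw [hRp]; exact hd0.mono (Finset.erase_subset _ _))
      have hSval : Sval u (pickStep u st 0) ≤ Sval u (pickStep u st' 0) := by
        rw [sval_pickStep_zero hg hx, sval_pickStep_zero hg' hfq]
        have := hd0.le hxR
        linarith
      have h1 : (pickStep u st 0).1 = st.1.erase x := by rw [pickStep_of_some hx]
      have h1' : (pickStep u st' 0).1 = st.1.erase p := by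
        rw [pickStep_of_some hfq]; exact hRp
      refine ⟨hgn, hgn', hSval, ?_⟩
      rcases eq_or_ne x p with rfl | hxp
      · exact Or.inl (by rw [h1, h1'])
      · refine Or.inr ⟨p, x, ?_, ?_, ?_, ?_, ?_⟩
        · rw [h1]; exact Finset.mem_erase.2 ⟨Ne.symm hxp, hp⟩
        · rw [h1]; exact Finset.notMem_erase _ _
        · rw [h1, h1']
          have : insert x ((st.1.erase x).erase p) = st.1.erase p := by
            rw [Finset.erase_right_comm, Finset.insert_erase (Finset.mem_erase.2 ⟨hxp, hxR⟩)]
          exact this.symm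
        · rw [h1]; exact hdx.mono (Finset.erase_subset _ _)
        · rw [h1']; exact hd1.mono hsub'
    · -- agent 1 moves
      have hfp : favorite (u 1) st.1 = some p :=
        favorite_eq_some hp (hd1.mono hsub')
      obtain ⟨y', hy'⟩ := favorite_isSome (v := u 1) (R := st'.1) ⟨q, hqR'⟩
      obtain ⟨hy'mem, hdy'⟩ := favorite_spec hy'
      have h1 : (pickStep u st 1).1 = st.1.erase p := by rw [pickStep_of_some hfp]
      have h1' : (pickStep u st' 1).1 = st'.1.erase y' := by rw [pickStep_of_some hy']
      have hSval : Sval u (pickStep u st 1) ≤ Sval u (pickStep u st' 1) := by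
        rw [sval_pickStep_one, sval_pickStep_one]; exact hS
      refine ⟨hgn, hgn', hSval, ?_⟩
      rcases eq_or_ne y' q with rfl | hy'q
      · exact Or.inl (by rw [h1, h1', hRp])
      · have hy'Rp : y' ∈ st.1.erase p := by
          have := hR' ▸ hy'mem
          exact (Finset.mem_insert.1 this).resolve_left hy'q
        refine Or.inr ⟨y', q, ?_, ?_, ?_, ?_, ?_⟩
        · rw [h1]; exact hy'Rp
        · rw [h1]; exact hqnotRp
        · rw [h1, h1', hR']
          exact Finset.erase_insert_of_ne (Ne.symm hy'q)
        · rw [h1]; exact hd0.mono (Finset.erase_subset _ _)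
        · rw [h1']; exact hdy'.mono (Finset.erase_subset _ _)

lemma rel_fold {u : Fin 2 → Fin m → ℝ} {st st' : St m} (h : Rel u st st')
    (τ : List (Fin 2)) :
    Rel u (τ.foldl (pickStep u) st) (τ.foldl (pickStep u) st') := by
  induction τ generalizing st st' with
  | nil => exact h
  | cons a τ ih => exact ih (rel_step h a)

end QAux

namespace QAux
variable {m : ℕ}

lemma favorite_empty (v : Fin m → ℝ) : favorite v (∅ : Finset (Fin m)) = none := by
  rw [favorite, dif_neg]
  simp

lemma rel_swap {u : Fin 2 → Fin m → ℝ} (hu : ∀ i j, 0 ≤ u i j) {st : St m}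
    (hg : GoodSt st) :
    Rel u (pickStep u (pickStep u st 1) 0) (pickStep u (pickStep u st 0) 1) := by
  cases hf0 : favorite (u 0) st.1 with
  | none =>
    have hemp : st.1 = ∅ := favorite_eq_none hf0
    have hf1 : favorite (u 1) st.1 = none := by rw [hemp]; exact favorite_empty _
    rw [pickStep_of_none hf1, pickStep_of_none hf0, pickStep_of_none hf1]
    exact ⟨hg, hg, le_refl _, Or.inl rfl⟩
  | some z0 =>
    obtain ⟨hz0mem, hdz0⟩ := favorite_spec hf0
    obtain ⟨z1, hf1⟩ := favorite_isSome (v := u 1) (R := st.1) ⟨z0, hz0mem⟩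
    obtain ⟨hz1mem, hdz1⟩ := favorite_spec hf1
    have hgX1 : GoodSt (pickStep u st 1) := good_pickStep hg 1
    have hgY1 : GoodSt (pickStep u st 0) := good_pickStep hg 0
    have hX1 : (pickStep u st 1).1 = st.1.erase z1 := by rw [pickStep_of_some hf1]
    have hY1 : (pickStep u st 0).1 = st.1.erase z0 := by rw [pickStep_of_some hf0]
    have hSX1 : Sval u (pickStep u st 1) = Sval u st := sval_pickStep_one
    have hSY1 : Sval u (pickStep u st 0) = Sval u st + u 0 z0 :=
      sval_pickStep_zero hg hf0
    rcases eq_or_ne z0 z1 with rfl | hne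
    · -- common favorite z0
      cases hfx : favorite (u 0) (st.1.erase z0) with
      | none =>
        have hemp : st.1.erase z0 = ∅ := favorite_eq_none hfx
        have hfX : favorite (u 0) (pickStep u st 1).1 = none := by rw [hX1]; exact hfx
        have hfY : favorite (u 1) (pickStep u st 0).1 = none := by
          rw [hY1, hemp]; exact favorite_empty _
        rw [pickStep_of_none hfX, pickStep_of_none hfY]
        refine ⟨hgX1, hgY1, ?_, Or.inl (by rw [hX1, hY1])⟩
        rw [hSX1, hSY1]
        have := hu 0 z0
        linarith
      | some x =>
        obtain ⟨hxmem, hdx⟩ := favorite_spec hfx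
        obtain ⟨y, hfy⟩ := favorite_isSome (v := u 1) (R := st.1.erase z0) ⟨x, hxmem⟩
        obtain ⟨hymem, hdy⟩ := favorite_spec hfy
        have hfX : favorite (u 0) (pickStep u st 1).1 = some x := by rw [hX1]; exact hfx
        have hfY : favorite (u 1) (pickStep u st 0).1 = some y := by rw [hY1]; exact hfy
        have hSX2 : Sval u (pickStep u (pickStep u st 1) 0) = Sval u st + u 0 x := by
          rw [sval_pickStep_zero hgX1 hfX, hSX1]
        have hSY2 : Sval u (pickStep u (pickStep u st 0) 1) = Sval u st + u 0 z0 := by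
          rw [sval_pickStep_one, hSY1]
        have hX2 : (pickStep u (pickStep u st 1) 0).1 = (st.1.erase z0).erase x := by
          rw [pickStep_of_some hfX, hX1]
        have hY2 : (pickStep u (pickStep u st 0) 1).1 = (st.1.erase z0).erase y := by
          rw [pickStep_of_some hfY, hY1]
        have hSle : Sval u (pickStep u (pickStep u st 1) 0) ≤
            Sval u (pickStep u (pickStep u st 0) 1) := by
          rw [hSX2, hSY2]
          have := hdz0.le (Finset.mem_of_mem_erase hxmem)
          linarith
        refine ⟨good_pickStep hgX1 0, good_pickStep hgY1 1, hSle, ?_⟩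
        rcases eq_or_ne x y with rfl | hxy
        · exact Or.inl (by rw [hX2, hY2])
        · refine Or.inr ⟨y, x, ?_, ?_, ?_, ?_, ?_⟩
          · rw [hX2]; exact Finset.mem_erase.2 ⟨Ne.symm hxy, hymem⟩
          · rw [hX2]; exact Finset.notMem_erase _ _
          · rw [hX2, hY2]
            have : insert x (((st.1.erase z0).erase x).erase y) =
                (st.1.erase z0).erase y := by
              rw [Finset.erase_right_comm,
                Finset.insert_erase (Finset.mem_erase.2 ⟨hxy, hxmem⟩)]
            exact this.symm
          · rw [hX2]; exact hdx.mono (Finset.erase_subset _ _)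
          · rw [hY2]; exact hdy.mono (Finset.erase_subset _ _)
    · -- distinct favorites
      have hfX : favorite (u 0) (pickStep u st 1).1 = some z0 := by
        rw [hX1]
        exact favorite_eq_some (Finset.mem_erase.2 ⟨hne, hz0mem⟩)
          (hdz0.mono (fun r hr =>
            Finset.mem_of_mem_erase (Finset.mem_of_mem_erase hr)))
      have hfY : favorite (u 1) (pickStep u st 0).1 = some z1 := by
        rw [hY1]
        exact favorite_eq_some (Finset.mem_erase.2 ⟨Ne.symm hne, hz1mem⟩)
          (hdz1.mono (fun r hr =>
            Finset.mem_of_mem_erase (Finset.mem_of_mem_erase hr)))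
      have hSle : Sval u (pickStep u (pickStep u st 1) 0) =
          Sval u (pickStep u (pickStep u st 0) 1) := by
        rw [sval_pickStep_zero hgX1 hfX, sval_pickStep_one (st := pickStep u st 0),
          hSX1, hSY1]
      refine ⟨good_pickStep hgX1 0, good_pickStep hgY1 1, le_of_eq hSle, Or.inl ?_⟩
      rw [pickStep_of_some hfX, pickStep_of_some hfY]
      dsimp only
      rw [hX1, hY1, Finset.erase_right_comm]

end QAux

namespace QAux
variable {m : ℕ}

lemma good_fold {u : Fin 2 → Fin m → ℝ} {st : St m} (hg : GoodSt st)
    (ρ : List (Fin 2)) : GoodSt (ρ.foldl (pickStep u) st) := by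
  induction ρ generalizing st with
  | nil => exact hg
  | cons a ρ ih => exact ih (good_pickStep hg a)

lemma sval_swap_le {u : Fin 2 → Fin m → ℝ} (hu : ∀ i j, 0 ≤ u i j) {st : St m}
    (hg : GoodSt st) (ρ τ : List (Fin 2)) :
    Sval u ((ρ ++ 1 :: 0 :: τ).foldl (pickStep u) st) ≤
    Sval u ((ρ ++ 0 :: 1 :: τ).foldl (pickStep u) st) := by
  rw [List.foldl_append, List.foldl_append]
  have hg1 : GoodSt (ρ.foldl (pickStep u) st) := good_fold hg ρ
  simp only [List.foldl_cons]
  exact (rel_fold (rel_swap hu hg1) τ).2.2.1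

lemma sval_last_le {u : Fin 2 → Fin m → ℝ} (hu : ∀ i j, 0 ≤ u i j) {st : St m}
    (hg : GoodSt st) (ρ : List (Fin 2)) :
    Sval u ((ρ ++ [1]).foldl (pickStep u) st) ≤
    Sval u ((ρ ++ [0]).foldl (pickStep u) st) := by
  rw [List.foldl_append, List.foldl_append]
  have hg1 : GoodSt (ρ.foldl (pickStep u) st) := good_fold hg ρ
  simp only [List.foldl_cons, List.foldl_nil]
  rw [sval_pickStep_one]
  cases hf : favorite (u 0) (ρ.foldl (pickStep u) st).1 with
  | none => rw [pickStep_of_none hf]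
  | some j =>
    rw [sval_pickStep_zero hg1 hf]
    have := hu 0 j
    linarith

end QAux

namespace QAux

/-- Number of 0-picks among the first `k` entries. -/
def cnt (l : List (Fin 2)) (k : ℕ) : ℕ := (l.take k).count 0

lemma cnt_zero (l : List (Fin 2)) : cnt l 0 = 0 := rfl

lemma cnt_succ (l : List (Fin 2)) (k : ℕ) (h : k < l.length) :
    cnt l (k + 1) = cnt l k + if l.get ⟨k, h⟩ = 0 then 1 else 0 := by
  unfold cnt
  have ht : l.take (k + 1) = l.take k ++ [l.get ⟨k, h⟩] := by
    rw [List.take_succ, List.getElem?_eq_getElem h]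
    rfl
  rw [ht, List.count_append]
  simp [List.count_cons, List.count_nil]

lemma cnt_succ' (l : List (Fin 2)) (k : ℕ) (h : k < l.length) (x : Fin 2)
    (hx : l.get ⟨k, h⟩ = x) :
    cnt l (k + 1) = cnt l k + if x = 0 then 1 else 0 := by
  rw [cnt_succ l k h, hx]

lemma cnt_mono (l : List (Fin 2)) {k k' : ℕ} (h : k ≤ k') : cnt l k ≤ cnt l k' := by
  unfold cnt
  have : l.take k = (l.take k').take k := by rw [List.take_take, min_eq_left h]
  rw [this]
  exact (List.take_sublist _ _).count_le _

lemma cnt_stable (l : List (Fin 2)) {k : ℕ} (h : l.length ≤ k) :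
    cnt l k = cnt l l.length := by
  unfold cnt
  rw [List.take_of_length_le h, List.take_of_length_le (le_refl _)]

lemma count_zero_add_count_one (l : List (Fin 2)) : l.count 0 + l.count 1 = l.length := by
  induction l with
  | nil => rfl
  | cons a l ih =>
    rcases fin2 a with rfl | rfl <;>
      simp [List.count_cons, ← ih] <;> omega

lemma cnt_le (l : List (Fin 2)) (k : ℕ) : cnt l k ≤ k := by
  unfold cnt
  exact le_trans List.count_le_length (by simp)

end QAux

namespace QAux

lemma cnt_succ_le (l : List (Fin 2)) (k : ℕ) : cnt l (k + 1) ≤ cnt l k + 1 := by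
  rcases lt_or_ge k l.length with h | h
  · rw [cnt_succ l k h]
    split <;> omega
  · rw [cnt_stable l (by omega : l.length ≤ k + 1), cnt_stable l h]
    omega

lemma cnt_const_of_ones (π : List (Fin 2)) (k₁ b : ℕ) (hb : b ≤ π.length)
    (hones : ∀ i (h : i < π.length), k₁ ≤ i → i < b → π.get ⟨i, h⟩ = 1) :
    ∀ i, k₁ ≤ i → i ≤ b → cnt π i = cnt π k₁ := by
  have key : ∀ d, k₁ + d ≤ b → cnt π (k₁ + d) = cnt π k₁ := by
    intro d
    induction d with
    | zero => intro _; rfl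
    | succ d ih =>
      intro hd
      have hlt : k₁ + d < π.length := by omega
      rw [show k₁ + (d+1) = (k₁ + d) + 1 by omega,
        cnt_succ π (k₁ + d) hlt, hones _ hlt (by omega) (by omega), ih (by omega)]
      simp
  intro i hi hib
  have : i = k₁ + (i - k₁) := by omega
  rw [this]
  exact key _ (by omega)

lemma cnt_append_of_le (ρ l : List (Fin 2)) {k : ℕ} (h : k ≤ ρ.length) :
    cnt (ρ ++ l) k = cnt ρ k := by
  unfold cnt
  rw [List.take_append, Nat.sub_eq_zero_of_le h]
  simp

lemma cnt_append_of_ge (ρ l : List (Fin 2)) {k : ℕ} (h : ρ.length ≤ k) :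
    cnt (ρ ++ l) k = ρ.count 0 + cnt l (k - ρ.length) := by
  unfold cnt
  rw [List.take_append, List.take_of_length_le h, List.count_append]

lemma cnt_swap_pair (ρ τ : List (Fin 2)) (x y : Fin 2) {k : ℕ}
    (h : ρ.length + 2 ≤ k) :
    cnt (ρ ++ x :: y :: τ) k = cnt (ρ ++ y :: x :: τ) k := by
  rw [cnt_append_of_ge _ _ (by omega), cnt_append_of_ge _ _ (by omega)]
  congr 1
  obtain ⟨d, hd⟩ : ∃ d, k - ρ.length = d + 2 := ⟨k - ρ.length - 2, by omega⟩
  rw [hd]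
  unfold cnt
  rw [show d + 2 = (d + 1) + 1 by omega]
  rw [List.take_succ_cons, List.take_succ_cons, List.take_succ_cons, List.take_succ_cons]
  simp [List.count_cons]
  omega

lemma cnt_mid (ρ l : List (Fin 2)) (x : Fin 2) :
    cnt (ρ ++ x :: l) (ρ.length + 1) = ρ.count 0 + if x = 0 then 1 else 0 := by
  rw [cnt_append_of_ge _ _ (by omega)]
  congr 1
  have h1 : ρ.length + 1 - ρ.length = 1 := by omega
  rw [h1]
  unfold cnt
  show List.count 0 [x] = _
  simp [List.count_cons]

lemma cnt_self (ρ : List (Fin 2)) : cnt ρ ρ.length = ρ.count 0 := by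
  unfold cnt
  rw [List.take_of_length_le (le_refl _)]

end QAux

namespace QAux

lemma eq_of_cnt_eq {m : ℕ} (π π' : List (Fin 2)) (hlen : π.length = m)
    (hlen' : π'.length = m) (h : ∀ k, k ≤ m → cnt π k = cnt π' k) : π = π' := by
  apply List.ext_get (by omega)
  intro i h1 h2
  have hi : i < m := by omega
  have e1 := cnt_succ π i h1
  have e2 := cnt_succ π' i h2
  have q1 := h i (by omega)
  have q2 := h (i + 1) (by omega)
  have heq : (if π.get ⟨i, h1⟩ = 0 then 1 else 0 : ℕ) =
      if π'.get ⟨i, h2⟩ = 0 then 1 else 0 := by omega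
  rcases fin2 (π.get ⟨i, h1⟩) with hx | hx <;> rcases fin2 (π'.get ⟨i, h2⟩) with hy | hy <;>
    rw [hx, hy] <;> rw [hx] at heq <;> rw [hy] at heq <;> simp at heq

end QAux

namespace QAux

lemma cnt_singleton_pos (x : Fin 2) {d : ℕ} (hd : 1 ≤ d) :
    cnt [x] d = if x = 0 then 1 else 0 := by
  unfold cnt
  rw [List.take_of_length_le (by simpa using hd)]
  simp [List.count_cons]

set_option maxHeartbeats 2000000 in
lemma exists_improve {m : ℕ} {u : Fin 2 → Fin m → ℝ} (hu : ∀ i j, 0 ≤ u i j)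
    (π π' : List (Fin 2)) (hlen : π.length = m) (hlen' : π'.length = m)
    (hdom : ∀ k, cnt π k ≤ cnt π' k) (hne : ∃ k, cnt π k < cnt π' k) :
    ∃ π'' : List (Fin 2), π''.length = m ∧ (∀ k, cnt π'' k ≤ cnt π' k) ∧
      (∑ k ∈ Finset.range (m + 1), (cnt π' k - cnt π'' k)) <
        (∑ k ∈ Finset.range (m + 1), (cnt π' k - cnt π k)) ∧
      Sval u (π.foldl (pickStep u) (Finset.univ, fun _ => ∅)) ≤
        Sval u (π''.foldl (pickStep u) (Finset.univ, fun _ => ∅)) := by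
  classical
  have hginit : GoodSt ((Finset.univ : Finset (Fin m)), fun _ => (∅ : Finset (Fin m))) := by
    intro j hj
    simp at hj
  obtain ⟨k₀, hk₀, hk₀min⟩ : ∃ k₀, cnt π k₀ < cnt π' k₀ ∧
      ∀ j, j < k₀ → ¬cnt π j < cnt π' j :=
    ⟨Nat.find hne, Nat.find_spec hne, fun j hj => Nat.find_min hne hj⟩
  have hk₀0 : k₀ ≠ 0 := by
    intro h0
    rw [h0] at hk₀
    simp [cnt_zero] at hk₀
  set k₁ := k₀ - 1 with hk₁def
  have hk₀eq : k₀ = k₁ + 1 := by omega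
  have hk1eq : cnt π k₁ = cnt π' k₁ :=
    le_antisymm (hdom k₁) (not_lt.1 (hk₀min k₁ (by omega)))
  have hk₀m : k₀ ≤ m := by
    by_contra hgt
    have h1 := cnt_stable π (by omega : π.length ≤ k₁)
    have h2 := cnt_stable π (by omega : π.length ≤ k₀)
    have h3 := cnt_stable π' (by omega : π'.length ≤ k₁)
    have h4 := cnt_stable π' (by omega : π'.length ≤ k₀)
    omega
  have hk1m : k₁ < m := by omega
  have hk1len : k₁ < π.length := by omega
  have hget1 : π.get ⟨k₁, hk1len⟩ = 1 := by
    rcases fin2 (π.get ⟨k₁, hk1len⟩) with hx | hx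
    · exfalso
      have e1 : cnt π k₀ = cnt π k₁ + 1 := by
        rw [hk₀eq, cnt_succ π k₁ hk1len, hx]
        simp
      have e2 : cnt π' k₀ ≤ cnt π' k₁ + 1 := by
        rw [hk₀eq]
        exact cnt_succ_le π' k₁
      omega
    · exact hx
  by_cases hA : ∃ j, k₁ < j ∧ j < m ∧ π.getD j 1 = 0
  · -- Case A: swap an adjacent pair [1,0] → [0,1]
    obtain ⟨j₀, ⟨hj₀k, hj₀m, hj₀0⟩, hj₀min⟩ :
        ∃ j₀, (k₁ < j₀ ∧ j₀ < m ∧ π.getD j₀ 1 = 0) ∧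
          ∀ j, j < j₀ → ¬(k₁ < j ∧ j < m ∧ π.getD j 1 = 0) :=
      ⟨Nat.find hA, Nat.find_spec hA, fun j hj => Nat.find_min hA hj⟩
    have hj₀len : j₀ < π.length := by omega
    have hones : ∀ i (h : i < π.length), k₁ ≤ i → i < j₀ → π.get ⟨i, h⟩ = 1 := by
      intro i h hik hij
      rcases eq_or_lt_of_le hik with heq | hik'
      · subst heq
        exact hget1
      · have hnP := hj₀min i hij
        rcases fin2 (π.get ⟨i, h⟩) with hx | hx
        · exfalso
          apply hnP
          refine ⟨hik', by omega, ?_⟩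
          rw [List.getD_eq_getElem π 1 (by omega)]
          rw [List.get_eq_getElem] at hx
          exact hx
        · exact hx
    have hgetj₀ : π.get ⟨j₀, hj₀len⟩ = 0 := by
      rw [List.getD_eq_getElem π 1 hj₀len] at hj₀0
      rw [List.get_eq_getElem]
      exact hj₀0
    have hconst := cnt_const_of_ones π k₁ j₀ (by omega) hones
    obtain ⟨a, haj⟩ : ∃ a, j₀ = a + 1 := ⟨j₀ - 1, by omega⟩
    have hak : k₁ ≤ a := by omega
    have halen : a < π.length := by omega
    have hgeta : π.get ⟨a, halen⟩ = 1 := hones a halen hak (by omega)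
    set ρ := π.take a with hρdef
    set τ := π.drop (a + 2) with hτdef
    have hρlen : ρ.length = a := by
      rw [hρdef, List.length_take]
      omega
    have e2 : π.get ⟨a + 1, show a + 1 < π.length by omega⟩ = 0 := by
      have hfe : (⟨a + 1, show a + 1 < π.length by omega⟩ : Fin π.length) =
          ⟨j₀, hj₀len⟩ := by
        apply Fin.ext
        simp only
        omega
      rw [hfe]
      exact hgetj₀
    have hdrop : π.drop a = 1 :: 0 :: τ := by
      rw [List.drop_eq_getElem_cons halen,
        List.drop_eq_getElem_cons (show a + 1 < π.length by omega)]
      rw [hτdef, show a + 1 + 1 = a + 2 by omega, show π[a] = 1 from hgeta, show π[a + 1] = 0 from e2]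
    have hsplit : π = ρ ++ 1 :: 0 :: τ := by
      rw [hρdef, ← hdrop, List.take_append_drop]
    set π'' := ρ ++ 0 :: 1 :: τ with hπ''def
    have hπ''len : π''.length = m := by
      have h1 := congrArg List.length hsplit
      simp only [List.length_append, List.length_cons] at h1
      simp only [hπ''def, List.length_append, List.length_cons]
      omega
    have hc_lt : ∀ k, k ≤ a → cnt π'' k = cnt π k := by
      intro k hk
      rw [hπ''def, cnt_append_of_le _ _ (by omega)]
      conv_rhs => rw [hsplit]
      rw [cnt_append_of_le _ _ (by omega)]
    have hc_gt : ∀ k, a + 2 ≤ k → cnt π'' k = cnt π k := by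
      intro k hk
      rw [hπ''def, ← cnt_swap_pair ρ τ 1 0 (by omega), ← hsplit]
    have hcj₀ : cnt π'' j₀ = cnt π j₀ + 1 ∧ cnt π j₀ = cnt π k₁ := by
      constructor
      · have h1 : cnt π'' j₀ = ρ.count 0 + 1 := by
          rw [hπ''def, haj, ← hρlen, cnt_mid]
          simp
        have h2 : cnt π j₀ = ρ.count 0 := by
          conv_lhs => rw [hsplit]
          rw [haj, ← hρlen, cnt_mid]
          simp
        omega
      · exact hconst j₀ (by omega) (le_refl _)
    have hbound : cnt π j₀ + 1 ≤ cnt π' j₀ := by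
      have h2 : cnt π' k₀ ≤ cnt π' j₀ := cnt_mono π' (by omega)
      have h3 : cnt π k₁ ≤ cnt π k₀ := cnt_mono π (by omega)
      omega
    refine ⟨π'', hπ''len, ?_, ?_, ?_⟩
    · intro k
      rcases lt_or_ge k j₀ with hk | hk
      · rw [hc_lt k (by omega)]
        exact hdom k
      · rcases eq_or_lt_of_le hk with heq | hk'
        · subst heq
          omega
        · rw [hc_gt k (by omega)]
          exact hdom k
    · apply Finset.sum_lt_sum
      · intro k _
        rcases lt_or_ge k j₀ with hk | hk
        · rw [hc_lt k (by omega)]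
        · rcases eq_or_lt_of_le hk with heq | hk'
          · subst heq
            omega
          · rw [hc_gt k (by omega)]
      · exact ⟨j₀, Finset.mem_range.2 (by omega), by omega⟩
    · conv_lhs => rw [hsplit]
      rw [hπ''def]
      exact sval_swap_le hu hginit ρ τ
  · -- Case B: change the last entry from 1 to 0
    push_neg at hA
    have honesB : ∀ i (h : i < π.length), k₁ ≤ i → i < m → π.get ⟨i, h⟩ = 1 := by
      intro i h hik him
      rcases eq_or_lt_of_le hik with heq | hik'
      · subst heq
        exact hget1
      · rcases fin2 (π.get ⟨i, h⟩) with hx | hx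
        · exfalso
          apply hA i hik' him
          rw [List.getD_eq_getElem π 1 (by omega)]
          rw [List.get_eq_getElem] at hx
          exact hx
        · exact hx
    have hconst := cnt_const_of_ones π k₁ m (by omega)
      (fun i h hik hib => honesB i h hik (by omega))
    set ρ := π.take (m - 1) with hρdef
    have hρlen : ρ.length = m - 1 := by
      rw [hρdef, List.length_take]
      omega
    have hdrop : π.drop (m - 1) = [1] := by
      rw [List.drop_eq_getElem_cons (show m - 1 < π.length by omega)]
      have h2 : π.drop (m - 1 + 1) = [] := List.drop_eq_nil_of_le (by omega)
      rw [h2, show π[m - 1] = 1 from honesB (m - 1) (by omega) (by omega) (by omega)]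
    have hsplit : π = ρ ++ [1] := by
      rw [hρdef, ← hdrop, List.take_append_drop]
    set π'' := ρ ++ [0] with hπ''def
    have hπ''len : π''.length = m := by
      simp only [hπ''def, List.length_append, List.length_cons, List.length_nil]
      omega
    have hc_lt : ∀ k, k ≤ m - 1 → cnt π'' k = cnt π k := by
      intro k hk
      rw [hπ''def, cnt_append_of_le _ _ (by omega)]
      conv_rhs => rw [hsplit]
      rw [cnt_append_of_le _ _ (by omega)]
    have hc_ge : ∀ k, m ≤ k → cnt π'' k = cnt π k + 1 := by
      intro k hk
      rw [hπ''def, cnt_append_of_ge _ _ (by omega)]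
      conv_rhs => rw [hsplit]
      rw [cnt_append_of_ge _ _ (by omega)]
      rw [cnt_singleton_pos _ (by omega), cnt_singleton_pos _ (by omega)]
      simp
    have hcm : cnt π m = cnt π k₁ := hconst m (by omega) (le_refl _)
    have hbound : ∀ k, m ≤ k → cnt π k + 1 ≤ cnt π' k := by
      intro k hk
      have h1 : cnt π' m ≤ cnt π' k := cnt_mono π' hk
      have h2 : cnt π' k₀ ≤ cnt π' m := cnt_mono π' (by omega)
      have h3 : cnt π k = cnt π m := by
        rw [cnt_stable π (by omega), cnt_stable π (by omega : π.length ≤ m)]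
      have h4 : cnt π k₁ ≤ cnt π k₀ := cnt_mono π (by omega)
      omega
    refine ⟨π'', hπ''len, ?_, ?_, ?_⟩
    · intro k
      rcases lt_or_ge k m with hk | hk
      · rw [hc_lt k (by omega)]
        exact hdom k
      · rw [hc_ge k hk]
        exact hbound k hk
    · apply Finset.sum_lt_sum
      · intro k hkmem
        rcases lt_or_ge k m with hk | hk
        · rw [hc_lt k (by omega)]
        · have := hc_ge k hk
          have := hbound k hk
          omega
      · refine ⟨m, Finset.mem_range.2 (by omega), ?_⟩
        have := hc_ge m (le_refl _)
        have := hbound m (le_refl _)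
        omega
    · conv_lhs => rw [hsplit]
      rw [hπ''def]
      exact sval_last_le hu hginit ρ

lemma sval_mono_of_cnt_le {m : ℕ} {u : Fin 2 → Fin m → ℝ} (hu : ∀ i j, 0 ≤ u i j)
    (π π' : List (Fin 2)) (hlen : π.length = m) (hlen' : π'.length = m)
    (hdom : ∀ k, cnt π k ≤ cnt π' k) :
    Sval u (π.foldl (pickStep u) (Finset.univ, fun _ => ∅)) ≤
      Sval u (π'.foldl (pickStep u) (Finset.univ, fun _ => ∅)) := by
  obtain ⟨N, hN⟩ : ∃ N, (∑ k ∈ Finset.range (m + 1), (cnt π' k - cnt π k)) ≤ N :=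
    ⟨_, le_refl _⟩
  induction N generalizing π with
  | zero =>
    have hz : ∀ k, k ≤ m → cnt π k = cnt π' k := by
      intro k hk
      have h1 : cnt π' k - cnt π k = 0 := by
        by_contra h
        have hpos : 0 < ∑ k ∈ Finset.range (m + 1), (cnt π' k - cnt π k) :=
          Finset.sum_pos' (fun i _ => Nat.zero_le _)
            ⟨k, Finset.mem_range.2 (by omega), by omega⟩
        omega
      have := hdom k
      omega
    rw [eq_of_cnt_eq π π' hlen hlen' hz]
  | succ N ih =>
    by_cases hne : ∃ k, cnt π k < cnt π' k
    · obtain ⟨π'', h1, h2, h3, h4⟩ := exists_improve hu π π' hlen hlen' hdom hne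
      exact le_trans h4 (ih π'' h1 h2 (by omega))
    · push_neg at hne
      have : π = π' := eq_of_cnt_eq π π' hlen hlen'
        (fun k _ => le_antisymm (hdom k) (hne k))
      rw [this]

end QAux

namespace QAux

lemma quota_pick_zero {w w' : Fin 2 → ℝ} (hw : ∀ i, 0 < w i)
    (h0 : w 0 < w' 0) (h1 : w' 1 = w 1)
    {π π' : List (Fin 2)} (hq : IsQuotaSeq w π) (hq' : IsQuotaSeq w' π')
    {k : ℕ} (hk1 : k < π.length) (hk2 : k < π'.length)
    (hck : cnt π k = cnt π' k)
    (hg : π.get ⟨k, hk1⟩ = 0) : π'.get ⟨k, hk2⟩ = 0 := by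
  rcases fin2 (π'.get ⟨k, hk2⟩) with h | h
  · exact h
  exfalso
  have hw0 := hw 0
  have hw1 := hw 1
  have hw'0 : 0 < w' 0 := lt_trans hw0 h0
  have hkpos : (0:ℝ) < (k:ℝ) + 1 := by positivity
  obtain ⟨hA, hB⟩ := hq k hk1
  obtain ⟨hA', hB'⟩ := hq' k hk2
  rw [hg] at hA hB
  rw [h] at hA' hB'
  rw [Fin.sum_univ_two] at hA hB hA' hB'
  rw [h1] at hA' hB'
  -- count bookkeeping
  have hlt1 : (π.take k).length = k := by rw [List.length_take]; omega
  have hlt2 : (π'.take k).length = k := by rw [List.length_take]; omega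
  have hsum1 := count_zero_add_count_one (π.take k)
  have hsum2 := count_zero_add_count_one (π'.take k)
  have hck' : (π.take k).count 0 = (π'.take k).count 0 := hck
  have hc1eq : (π'.take k).count 1 = (π.take k).count 1 := by omega
  rw [hck'] at hA hB
  rw [hc1eq] at hA' hB'
  set a : ℝ := (((π'.take k).count 0 : ℕ) : ℝ) with hadef
  set b : ℝ := (((π.take k).count 1 : ℕ) : ℝ) with hbdef
  have hanneg : 0 ≤ a := Nat.cast_nonneg _
  -- hA : a < w 0 * (k+1) / (w 0 + w 1)
  -- hA' : b < w 1 * (k+1) / (w' 0 + w 1)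
  by_cases helig : b < w 1 * ((k:ℝ) + 1) / (w 0 + w 1)
  · have hB1 := (hB 1 helig).1
    -- hB1 : (a+1)/w 0 ≤ (b+1)/w 1
    have hle : w 0 * ((k:ℝ) + 1) / (w 0 + w 1) ≤ w' 0 * ((k:ℝ) + 1) / (w' 0 + w 1) := by
      rw [div_le_div_iff₀ (by linarith) (by linarith)]
      nlinarith [mul_nonneg (mul_nonneg hkpos.le hw1.le) (sub_nonneg.2 h0.le)]
    have helig0 : a < w' 0 * ((k:ℝ) + 1) / (w' 0 + w 1) := lt_of_lt_of_le hA hle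
    have hstr := (hB' 0 helig0).2 (by decide)
    -- hstr : (b+1)/w 1 < (a+1)/w' 0
    have hlt : (a + 1) / w' 0 < (a + 1) / w 0 :=
      div_lt_div_of_pos_left (by linarith) hw0 h0
    linarith
  · push_neg at helig
    have hmid : w 1 * ((k:ℝ) + 1) / (w' 0 + w 1) < w 1 * ((k:ℝ) + 1) / (w 0 + w 1) :=
      div_lt_div_of_pos_left (by positivity) (by linarith) (by linarith)
    linarith

end QAux

namespace QAux

lemma quota_cnt_mono {m : ℕ} {w w' : Fin 2 → ℝ} (hw : ∀ i, 0 < w i)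
    (h0 : w 0 < w' 0) (h1 : w' 1 = w 1)
    {π π' : List (Fin 2)} (hlen : π.length = m) (hlen' : π'.length = m)
    (hq : IsQuotaSeq w π) (hq' : IsQuotaSeq w' π') :
    ∀ k, cnt π k ≤ cnt π' k := by
  have key : ∀ k, k ≤ m → cnt π k ≤ cnt π' k := by
    intro k
    induction k with
    | zero => intro _; rw [cnt_zero, cnt_zero]
    | succ k ih =>
      intro hk1
      have hkm : k < m := by omega
      have hklen : k < π.length := by omega
      have hklen' : k < π'.length := by omega
      have hle := ih (by omega)
      rcases eq_or_lt_of_le hle with heq | hlt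
      · rcases fin2 (π.get ⟨k, hklen⟩) with hg | hg
        · have hg' := quota_pick_zero hw h0 h1 hq hq' hklen hklen' heq hg
          rw [cnt_succ π k hklen, cnt_succ π' k hklen', hg, hg']
          omega
        · have e1 : cnt π (k + 1) = cnt π k := by
            rw [cnt_succ π k hklen, hg]
            simp
          have e2 := cnt_mono π' (by omega : k ≤ k + 1)
          omega
      · have e1 := cnt_succ_le π k
        have e2 := cnt_mono π' (by omega : k ≤ k + 1)
        omega
  intro k
  rcases le_or_gt k m with h | h
  · exact key k h
  · have e1 : cnt π k = cnt π m := by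
      rw [cnt_stable π (by omega), cnt_stable π (by omega : π.length ≤ m)]
    have e2 : cnt π' k = cnt π' m := by
      rw [cnt_stable π' (by omega), cnt_stable π' (by omega : π'.length ≤ m)]
    have := key m (le_refl m)
    omega

end QAux



/-- For two agents (agent 1 is `0`, agent 2 is `1`), the quota method
satisfies weight-consistency and weight-monotonicity: if agent 1's weight increases
from `w 0` to `w' 0` (agent 2's weight unchanged), then the quota picking sequence
for `w'` can be obtained from the one for `w` by moving some of agent 1's picks
earlier, inserting occurrences of agent 1, and trimming the suffix to length `m`
(equivalently, for two agents: every prefix of the new sequence contains at least as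
many picks of agent 1 as the corresponding prefix of the old one); consequently, for
any additive utilities, agent 1's utility does not decrease. -/
theorem quota_two_agents_weight_consistent_and_monotone
    (m : ℕ) (w w' : Fin 2 → ℝ) (hw : ∀ i, 0 < w i)
    (h0 : w 0 < w' 0) (h1 : w' 1 = w 1)
    (π π' : List (Fin 2)) (hlen : π.length = m) (hlen' : π'.length = m)
    (hq : IsQuotaSeq w π) (hq' : IsQuotaSeq w' π') :
    (∀ k : ℕ, (π.take k).count 0 ≤ (π'.take k).count 0) ∧
    (∀ u : Fin 2 → Fin m → ℝ, (∀ i j, 0 ≤ u i j) →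
      (∑ x ∈ allocate u π 0, u 0 x) ≤ ∑ x ∈ allocate u π' 0, u 0 x) := by
  have hcnt : ∀ k, QAux.cnt π k ≤ QAux.cnt π' k :=
    QAux.quota_cnt_mono hw h0 h1 hlen hlen' hq hq'
  refine ⟨hcnt, ?_⟩
  intro u hu
  have h := QAux.sval_mono_of_cnt_le hu π π' hlen hlen' hcnt
  simpa [QAux.Sval, allocate] using h
end

section
/- In the unweighted setting, the maximum Nash welfare (MNW) solution satisfies neither resource-monotonicity nor population-monotonicity. Specifically: (1) there exist two agents with additive utilities over four items such that the allocation maximizing the product of utilities over the first three items is unique, the allocation maximizing the product of utilities over all four items is unique, and agent 1's utility in the latter is strictly smaller than in the former; and (2) there exist three agents with additive utilities over four items such that the product-maximizing allocation among the first two agents is unique, the product-maximizing allocation among all three agents is unique, and agent 1's utility in the latter is strictly larger than in the former. -/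
open Finset

/-- `M` is an allocation (partition) of the item set `S` among the `n` agents. -/
def IsPartition {n m : ℕ} (M : Fin n → Finset (Fin m)) (S : Finset (Fin m)) : Prop :=
  (∀ i j : Fin n, i ≠ j → Disjoint (M i) (M j)) ∧ Finset.univ.biUnion M = S

/-- Every partition of `S` among `n > 0` agents is induced by an assignment map
`f : items → agents`. -/
lemma exists_assign {n m : ℕ} [NeZero n] {M : Fin n → Finset (Fin m)} {S : Finset (Fin m)}
    (h : IsPartition M S) : ∃ f : Fin m → Fin n, ∀ i, M i = S.filter (fun x => f x = i) := by
  classical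
  obtain ⟨hd, hc⟩ := h
  have hmem : ∀ x ∈ S, ∃ i, x ∈ M i := by
    intro x hx; rw [← hc] at hx; simpa using Finset.mem_biUnion.mp hx
  refine ⟨fun x => if h : x ∈ S then (hmem x h).choose else 0, fun i => ?_⟩
  ext x
  simp only [Finset.mem_filter]
  constructor
  · intro hx
    have hxS : x ∈ S := by
      rw [← hc]; exact Finset.mem_biUnion.mpr ⟨i, Finset.mem_univ i, hx⟩
    refine ⟨hxS, ?_⟩
    rw [dif_pos hxS]
    by_contra hne
    exact Finset.disjoint_left.mp (hd _ _ hne) (hmem x hxS).choose_spec hx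
  · rintro ⟨hxS, hfx⟩
    rw [dif_pos hxS] at hfx
    exact hfx ▸ (hmem x hxS).choose_spec

/-- Utility table for the resource-monotonicity counterexample. -/
def vRM : Fin 2 → Fin 4 → ℕ := ![![3,4,5,3],![5,3,2,0]]

/-- Utility table for the population-monotonicity counterexample. -/
def wPM : Fin 3 → Fin 4 → ℕ := ![![2,3,1,5],![0,1,2,4],![0,4,2,1]]

lemma cast_prod_sum {n : ℕ} (v : Fin n → Fin 4 → ℕ) (N : Fin n → Finset (Fin 4)) :
    (∏ i, ∑ x ∈ N i, ((v i x : ℕ) : ℝ)) = ((∏ i, ∑ x ∈ N i, v i x : ℕ) : ℝ) := by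
  push_cast; rfl

lemma val1b : (∏ i, ∑ x ∈ (![{1,2},{0}] : Fin 2 → Finset (Fin 4)) i, vRM i x) = 45 := by decide
lemma val1d : (∏ i, ∑ x ∈ (![{2,3},{0,1}] : Fin 2 → Finset (Fin 4)) i, vRM i x) = 64 := by decide
lemma val2b : (∏ i : Fin 2, ∑ x ∈ (![{0,1},{2,3}] : Fin 2 → Finset (Fin 4)) i, wPM i.castSucc x) = 30 := by decide
lemma val2d : (∏ i, ∑ x ∈ (![({0,3} : Finset (Fin 4)),{2},{1}] : Fin 3 → Finset (Fin 4)) i, wPM i x) = 56 := by decide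

lemma key1a : ∀ f : Fin 4 → Fin 2,
    (∏ i, ∑ x ∈ ({0,1,2} : Finset (Fin 4)).filter (fun x => f x = i), vRM i x) ≤ 45 := by decide

lemma key1b : ∀ f : Fin 4 → Fin 2,
    (∏ i, ∑ x ∈ ({0,1,2} : Finset (Fin 4)).filter (fun x => f x = i), vRM i x) = 45 →
    ∀ i, ({0,1,2} : Finset (Fin 4)).filter (fun x => f x = i) =
      (![{1,2},{0}] : Fin 2 → Finset (Fin 4)) i := by decide

lemma key1c : ∀ f : Fin 4 → Fin 2,
    (∏ i, ∑ x ∈ (Finset.univ : Finset (Fin 4)).filter (fun x => f x = i), vRM i x) ≤ 64 := by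
  decide

lemma key1d : ∀ f : Fin 4 → Fin 2,
    (∏ i, ∑ x ∈ (Finset.univ : Finset (Fin 4)).filter (fun x => f x = i), vRM i x) = 64 →
    ∀ i, (Finset.univ : Finset (Fin 4)).filter (fun x => f x = i) =
      (![{2,3},{0,1}] : Fin 2 → Finset (Fin 4)) i := by decide

lemma key2a : ∀ f : Fin 4 → Fin 2,
    (∏ i : Fin 2, ∑ x ∈ (Finset.univ : Finset (Fin 4)).filter (fun x => f x = i),
      wPM i.castSucc x) ≤ 30 := by decide

lemma key2b : ∀ f : Fin 4 → Fin 2,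
    (∏ i : Fin 2, ∑ x ∈ (Finset.univ : Finset (Fin 4)).filter (fun x => f x = i),
      wPM i.castSucc x) = 30 →
    ∀ i, (Finset.univ : Finset (Fin 4)).filter (fun x => f x = i) =
      (![{0,1},{2,3}] : Fin 2 → Finset (Fin 4)) i := by decide

lemma key2c : ∀ f : Fin 4 → Fin 3,
    (∏ i, ∑ x ∈ (Finset.univ : Finset (Fin 4)).filter (fun x => f x = i), wPM i x) ≤ 56 := by
  decide

lemma key2d : ∀ f : Fin 4 → Fin 3,
    (∏ i, ∑ x ∈ (Finset.univ : Finset (Fin 4)).filter (fun x => f x = i), wPM i x) = 56 →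
    ∀ i, (Finset.univ : Finset (Fin 4)).filter (fun x => f x = i) =
      (![{0,3},{2},{1}] : Fin 3 → Finset (Fin 4)) i := by decide

/-- In the unweighted setting, MNW satisfies neither
resource-monotonicity nor population-monotonicity: (1) there are two agents with
additive utilities over four items such that the unique allocation maximizing the
product of utilities over the first three items gives agent 1 strictly more utility
than the unique allocation maximizing the product of utilities over all four items;
(2) there are three agents with additive utilities over four items such that agent
1's utility in the unique product-maximizing allocation among all three agents is
strictly larger than in the unique product-maximizing allocation among the first two
agents. -/
theorem MNW_not_resource_monotone_and_not_population_monotone :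
    (∃ (u : Fin 2 → Fin 4 → ℝ) (M3 M4 : Fin 2 → Finset (Fin 4)),
       (∀ i j, 0 ≤ u i j) ∧
       IsPartition M3 ({0, 1, 2} : Finset (Fin 4)) ∧
       (∀ M', IsPartition M' ({0, 1, 2} : Finset (Fin 4)) →
         (∏ i, ∑ x ∈ M' i, u i x) ≤ ∏ i, ∑ x ∈ M3 i, u i x) ∧
       (∀ M', IsPartition M' ({0, 1, 2} : Finset (Fin 4)) →
         (∏ i, ∑ x ∈ M' i, u i x) = (∏ i, ∑ x ∈ M3 i, u i x) → M' = M3) ∧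
       IsPartition M4 (Finset.univ : Finset (Fin 4)) ∧
       (∀ M', IsPartition M' (Finset.univ : Finset (Fin 4)) →
         (∏ i, ∑ x ∈ M' i, u i x) ≤ ∏ i, ∑ x ∈ M4 i, u i x) ∧
       (∀ M', IsPartition M' (Finset.univ : Finset (Fin 4)) →
         (∏ i, ∑ x ∈ M' i, u i x) = (∏ i, ∑ x ∈ M4 i, u i x) → M' = M4) ∧
       (∑ x ∈ M4 0, u 0 x) < ∑ x ∈ M3 0, u 0 x) ∧
    (∃ (u : Fin 3 → Fin 4 → ℝ) (M2 : Fin 2 → Finset (Fin 4)) (M3 : Fin 3 → Finset (Fin 4)),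
       (∀ i j, 0 ≤ u i j) ∧
       IsPartition M2 (Finset.univ : Finset (Fin 4)) ∧
       (∀ M', IsPartition M' (Finset.univ : Finset (Fin 4)) →
         (∏ i : Fin 2, ∑ x ∈ M' i, u i.castSucc x) ≤
           ∏ i : Fin 2, ∑ x ∈ M2 i, u i.castSucc x) ∧
       (∀ M', IsPartition M' (Finset.univ : Finset (Fin 4)) →
         (∏ i : Fin 2, ∑ x ∈ M' i, u i.castSucc x) =
           (∏ i : Fin 2, ∑ x ∈ M2 i, u i.castSucc x) → M' = M2) ∧
       IsPartition M3 (Finset.univ : Finset (Fin 4)) ∧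
       (∀ M', IsPartition M' (Finset.univ : Finset (Fin 4)) →
         (∏ i, ∑ x ∈ M' i, u i x) ≤ ∏ i, ∑ x ∈ M3 i, u i x) ∧
       (∀ M', IsPartition M' (Finset.univ : Finset (Fin 4)) →
         (∏ i, ∑ x ∈ M' i, u i x) = (∏ i, ∑ x ∈ M3 i, u i x) → M' = M3) ∧
       (∑ x ∈ M2 0, u 0 x) < ∑ x ∈ M3 0, u 0 x) := by
  constructor
  · refine ⟨fun i x => (vRM i x : ℝ), ![{1,2},{0}], ![{2,3},{0,1}],
      fun i j => by positivity, ⟨by decide, by decide⟩, ?_, ?_, ⟨by decide, by decide⟩,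
      ?_, ?_, ?_⟩
    · intro M' hM'
      obtain ⟨f, hf⟩ := exists_assign hM'
      simp only [hf]
      rw [cast_prod_sum, cast_prod_sum]
      exact_mod_cast le_trans (key1a f) (by decide)
    · intro M' hM' heq
      obtain ⟨f, hf⟩ := exists_assign hM'
      simp only [hf] at heq
      rw [cast_prod_sum, cast_prod_sum] at heq
      have hnat : (∏ i, ∑ x ∈ ({0,1,2} : Finset (Fin 4)).filter (fun x => f x = i), vRM i x)
          = 45 := by
        rw [← val1b]; exact_mod_cast heq
      funext i
      rw [hf i, key1b f hnat i]
    · intro M' hM'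
      obtain ⟨f, hf⟩ := exists_assign hM'
      simp only [hf]
      rw [cast_prod_sum, cast_prod_sum]
      exact_mod_cast le_trans (key1c f) (by decide)
    · intro M' hM' heq
      obtain ⟨f, hf⟩ := exists_assign hM'
      simp only [hf] at heq
      rw [cast_prod_sum, cast_prod_sum] at heq
      have hnat : (∏ i, ∑ x ∈ (Finset.univ : Finset (Fin 4)).filter (fun x => f x = i), vRM i x)
          = 64 := by
        rw [← val1d]; exact_mod_cast heq
      funext i
      rw [hf i, key1d f hnat i]
    · have h : (∑ x ∈ ({2,3} : Finset (Fin 4)), vRM 0 x) <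
          ∑ x ∈ ({1,2} : Finset (Fin 4)), vRM 0 x := by decide
      change (∑ x ∈ ({2,3} : Finset (Fin 4)), (vRM 0 x : ℝ)) < ∑ x ∈ ({1,2} : Finset (Fin 4)), (vRM 0 x : ℝ)
      exact_mod_cast h
  · refine ⟨fun i x => (wPM i x : ℝ), ![{0,1},{2,3}], ![{0,3},{2},{1}],
      fun i j => by positivity, ⟨by decide, by decide⟩, ?_, ?_, ⟨by decide, by decide⟩,
      ?_, ?_, ?_⟩
    · intro M' hM'
      obtain ⟨f, hf⟩ := exists_assign hM'
      simp only [hf]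
      rw [cast_prod_sum (fun i => wPM i.castSucc), cast_prod_sum (fun i => wPM i.castSucc)]
      exact_mod_cast le_trans (key2a f) (by decide)
    · intro M' hM' heq
      obtain ⟨f, hf⟩ := exists_assign hM'
      simp only [hf] at heq
      rw [cast_prod_sum (fun i => wPM i.castSucc), cast_prod_sum (fun i => wPM i.castSucc)] at heq
      have hnat : (∏ i : Fin 2, ∑ x ∈ (Finset.univ : Finset (Fin 4)).filter (fun x => f x = i),
          wPM i.castSucc x) = 30 := by
        rw [← val2b]; exact_mod_cast heq
      funext i
      rw [hf i, key2b f hnat i]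
    · intro M' hM'
      obtain ⟨f, hf⟩ := exists_assign hM'
      simp only [hf]
      rw [cast_prod_sum, cast_prod_sum]
      exact_mod_cast le_trans (key2c f) (by decide)
    · intro M' hM' heq
      obtain ⟨f, hf⟩ := exists_assign hM'
      simp only [hf] at heq
      rw [cast_prod_sum, cast_prod_sum] at heq
      have hnat : (∏ i, ∑ x ∈ (Finset.univ : Finset (Fin 4)).filter (fun x => f x = i), wPM i x)
          = 56 := by
        rw [← val2d]; exact_mod_cast heq
      funext i
      rw [hf i, key2d f hnat i]
    · have h : (∑ x ∈ ({0,1} : Finset (Fin 4)), wPM 0 x) <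
          ∑ x ∈ ({0,3} : Finset (Fin 4)), wPM 0 x := by decide
      change (∑ x ∈ ({0,1} : Finset (Fin 4)), (wPM 0 x : ℝ)) < ∑ x ∈ ({0,3} : Finset (Fin 4)), (wPM 0 x : ℝ)
      exact_mod_cast h
end

section
/- The maximum weighted Nash welfare (MWNW) solution satisfies weight-monotonicity: fix an instance with n agents (weights w_1,...,w_n > 0) and m items with additive utilities in which the maximum weighted Nash welfare is positive, and let w_i' > w_i for some agent i. If M = (M_1,...,M_n) maximizes Π_j u_j(M_j)^{w_j} over all allocations and M' = (M_1',...,M_n') maximizes Π_{j≠i} u_j(M_j')^{w_j} · u_i(M_i')^{w_i'} over all allocations, then u_i(M_i') ≥ u_i(M_i). -/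
open Finset

/-- The weighted Nash welfare of an allocation `M`. -/
noncomputable def WNW {n m : ℕ} (w : Fin n → ℝ) (u : Fin n → Fin m → ℝ)
    (M : Fin n → Finset (Fin m)) : ℝ :=
  ∏ i, (∑ x ∈ M i, u i x) ^ (w i)

/-- MWNW satisfies weight-monotonicity: in an instance whose maximum
weighted Nash welfare is positive, if `M` maximizes the weighted Nash welfare with
weights `w`, and `M'` maximizes the weighted Nash welfare after agent `i`'s weight is
increased to `wi' > w i`, then agent `i`'s utility under `M'` is at least her utility
under `M`. -/
theorem MWNW_weight_monotone
    (n m : ℕ) (w : Fin n → ℝ) (hw : ∀ j, 0 < w j)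
    (u : Fin n → Fin m → ℝ) (hu : ∀ a b, 0 ≤ u a b)
    (i : Fin n) (wi' : ℝ) (hwi' : w i < wi')
    (M M' : Fin n → Finset (Fin m))
    (hM : IsPartition M (Finset.univ : Finset (Fin m)))
    (hM' : IsPartition M' (Finset.univ : Finset (Fin m)))
    (hpos : 0 < WNW w u M)
    (hmax : ∀ M'', IsPartition M'' (Finset.univ : Finset (Fin m)) →
      WNW w u M'' ≤ WNW w u M)
    (hmax' : ∀ M'', IsPartition M'' (Finset.univ : Finset (Fin m)) →
      WNW (Function.update w i wi') u M'' ≤ WNW (Function.update w i wi') u M') :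
    (∑ x ∈ M i, u i x) ≤ ∑ x ∈ M' i, u i x := by
  classical
  set w' := Function.update w i wi' with hw'def
  have hw' : ∀ j, 0 < w' j := by
    intro j
    by_cases h : j = i
    · subst h; simp [hw'def]; linarith [hw j, hwi']
    · simpa [hw'def, Function.update_of_ne h] using hw j
  -- all factors of a positive WNW are positive
  have factor_pos : ∀ (v : Fin n → ℝ), (∀ j, 0 < v j) →
      ∀ (N : Fin n → Finset (Fin m)), 0 < WNW v u N → ∀ j, 0 < ∑ x ∈ N j, u j x := by
    intro v hv N hN j
    have hnn : 0 ≤ ∑ x ∈ N j, u j x := Finset.sum_nonneg fun x _ => hu j x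
    rcases hnn.lt_or_eq with h | h
    · exact h
    · exfalso
      have : WNW v u N = 0 := by
        apply Finset.prod_eq_zero (Finset.mem_univ j)
        rw [← h, Real.zero_rpow (ne_of_gt (hv j))]
      rw [this] at hN; exact lt_irrefl 0 hN
  have hMpos : ∀ j, 0 < ∑ x ∈ M j, u j x := factor_pos w hw M hpos
  have hpos2 : 0 < WNW w' u M :=
    Finset.prod_pos fun j _ => Real.rpow_pos_of_pos (hMpos j) _
  have hpos' : 0 < WNW w' u M' := lt_of_lt_of_le hpos2 (hmax' M hM)
  have hM'pos : ∀ j, 0 < ∑ x ∈ M' j, u j x := factor_pos w' hw' M' hpos'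
  set a := ∑ x ∈ M i, u i x with ha
  set a' := ∑ x ∈ M' i, u i x with ha'
  set P := ∏ j ∈ Finset.univ.erase i, (∑ x ∈ M j, u j x) ^ (w j) with hP
  set P' := ∏ j ∈ Finset.univ.erase i, (∑ x ∈ M' j, u j x) ^ (w j) with hP'
  have hPpos : 0 < P :=
    Finset.prod_pos fun j _ => Real.rpow_pos_of_pos (hMpos j) _
  have hP'pos : 0 < P' :=
    Finset.prod_pos fun j _ => Real.rpow_pos_of_pos (hM'pos j) _
  -- splitting lemmas
  have split : ∀ (N : Fin n → Finset (Fin m)),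
      WNW w u N = (∑ x ∈ N i, u i x) ^ (w i) *
        ∏ j ∈ Finset.univ.erase i, (∑ x ∈ N j, u j x) ^ (w j) := by
    intro N
    rw [WNW, ← Finset.mul_prod_erase _ _ (Finset.mem_univ i)]
  have split' : ∀ (N : Fin n → Finset (Fin m)),
      WNW w' u N = (∑ x ∈ N i, u i x) ^ wi' *
        ∏ j ∈ Finset.univ.erase i, (∑ x ∈ N j, u j x) ^ (w j) := by
    intro N
    rw [WNW, ← Finset.mul_prod_erase _ _ (Finset.mem_univ i)]
    congr 1
    · simp [hw'def]
    · exact Finset.prod_congr rfl fun j hj => by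
        rw [hw'def, Function.update_of_ne (Finset.ne_of_mem_erase hj)]
  have h1 : a' ^ (w i) * P' ≤ a ^ (w i) * P := by
    have := hmax M' hM'
    rwa [split M', split M] at this
  have h2 : a ^ wi' * P ≤ a' ^ wi' * P' := by
    have := hmax' M hM
    rwa [split' M, split' M'] at this
  -- combine
  by_contra hcon
  push_neg at hcon
  set d := wi' - w i with hd
  have hdpos : 0 < d := by linarith
  have hane : (0:ℝ) < a := hMpos i
  have ha'ne : (0:ℝ) < a' := hM'pos i
  have hsa : a ^ wi' = a ^ (w i) * a ^ d := by
    rw [← Real.rpow_add hane]; rw [hd]; ring_nf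
  have hsa' : a' ^ wi' = a' ^ (w i) * a' ^ d := by
    rw [← Real.rpow_add ha'ne]; rw [hd]; ring_nf
  have hdlt : a' ^ d < a ^ d := Real.rpow_lt_rpow (le_of_lt ha'ne) hcon hdpos
  -- multiply h1 and h2
  have key : (a' ^ (w i) * P') * (a ^ wi' * P) ≤ (a ^ (w i) * P) * (a' ^ wi' * P') := by
    have hb : 0 < a ^ wi' * P :=
      mul_pos (Real.rpow_pos_of_pos hane _) hPpos
    calc (a' ^ (w i) * P') * (a ^ wi' * P)
        ≤ (a ^ (w i) * P) * (a ^ wi' * P) := by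
          apply mul_le_mul_of_nonneg_right h1 (le_of_lt hb)
      _ ≤ (a ^ (w i) * P) * (a' ^ wi' * P') := by
          apply mul_le_mul_of_nonneg_left h2
          exact le_of_lt (mul_pos (Real.rpow_pos_of_pos hane _) hPpos)
  rw [hsa, hsa'] at key
  have hposall : 0 < a ^ (w i) * a' ^ (w i) * P * P' :=
    mul_pos (mul_pos (mul_pos (Real.rpow_pos_of_pos hane _)
      (Real.rpow_pos_of_pos ha'ne _)) hPpos) hP'pos
  nlinarith [key, hdlt, hposall, Real.rpow_pos_of_pos hane (w i),
    Real.rpow_pos_of_pos ha'ne (w i), Real.rpow_pos_of_pos hane d,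
    Real.rpow_pos_of_pos ha'ne d]
end

section
/- The maximum weighted Nash welfare (MWNW) solution does not satisfy weighted proportionality up to one item (WPROP1): there exists an instance with n agents (with suitable weights w_i > 0 summing appropriately) and n items, where every agent has positive utility for every item, such that every allocation maximizing the weighted Nash product Π_i u_i(M_i)^{w_i} assigns exactly one item to each agent and the resulting allocation violates WPROP1 for some agent. -/
open Finset

/-- MWNW does not satisfy WPROP1: there is an instance with `n`
agents and `n` items in which every agent has positive utility for every item, such
that every allocation maximizing the weighted Nash welfare assigns exactly one item
to each agent and violates WPROP1. -/
theorem MWNW_not_WPROP1 :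
    ∃ (n : ℕ) (w : Fin n → ℝ) (u : Fin n → Fin n → ℝ),
      (∀ i, 0 < w i) ∧ (∀ i j, 0 < u i j) ∧
      ∀ M : Fin n → Finset (Fin n), IsPartition M (Finset.univ : Finset (Fin n)) →
        (∀ M', IsPartition M' (Finset.univ : Finset (Fin n)) →
          WNW w u M' ≤ WNW w u M) →
        (∀ i, (M i).card = 1) ∧ ¬ isWPROP1 w u M := by
  refine ⟨3, ![9, 1, 1], fun _ _ => 1, ?_, ?_, ?_⟩
  · intro i; fin_cases i <;> norm_num
  · intro i j; norm_num
  · intro M hM hmax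
    have hpart : IsPartition (fun i : Fin 3 => {i}) (univ : Finset (Fin 3)) := by
      constructor
      · intro i j hij
        simpa [Finset.disjoint_singleton] using hij
      · ext x; simp
    have h1 : WNW ![9, 1, 1] (fun _ _ => (1 : ℝ)) (fun i : Fin 3 => {i}) = 1 := by
      unfold WNW; simp
    have hM1 : (1 : ℝ) ≤ WNW ![9, 1, 1] (fun _ _ => (1 : ℝ)) M := by
      have := hmax _ hpart; rwa [h1] at this
    have hne : ∀ i, (M i).Nonempty := by
      intro i
      by_contra h
      have he : M i = ∅ := Finset.not_nonempty_iff_eq_empty.mp h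
      have hz : WNW ![9, 1, 1] (fun _ _ => (1 : ℝ)) M = 0 := by
        unfold WNW
        apply Finset.prod_eq_zero (Finset.mem_univ i)
        rw [he]
        simp only [Finset.sum_empty]
        exact Real.zero_rpow (by fin_cases i <;> norm_num)
      linarith
    have hc1 : ∀ j, 1 ≤ (M j).card := fun j => Finset.card_pos.mpr (hne j)
    have hsum : ∑ i, (M i).card = 3 := by
      rw [← Finset.card_biUnion (fun i _ j _ h => hM.1 i j h), hM.2]
      simp
    rw [Fin.sum_univ_three] at hsum
    have h0 := hc1 0
    have h1' := hc1 1
    have h2 := hc1 2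
    have hc : (M 0).card = 1 ∧ (M 1).card = 1 ∧ (M 2).card = 1 := by omega
    have hcard : ∀ i, (M i).card = 1 := by
      intro i
      fin_cases i
      · exact hc.1
      · exact hc.2.1
      · exact hc.2.2
    refine ⟨hcard, ?_⟩
    intro hw
    obtain ⟨B, hB, hBcard, hineq⟩ := hw 0
    have hsB : (∑ x ∈ B, (1 : ℝ)) = (B.card : ℝ) := by simp
    have hsM : (∑ x ∈ M 0, (1 : ℝ)) = 1 := by
      rw [Finset.sum_const, hcard 0]; simp
    have hsU : (∑ x : Fin 3, (1 : ℝ)) = 3 := by simp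
    have hwsum : (∑ i', (![9, 1, 1] : Fin 3 → ℝ) i') = 11 := by
      rw [Fin.sum_univ_three]; norm_num [show (![9, 1, 1] : Fin 3 → ℝ) 2 = 1 from rfl]
    rw [hsB, hsM, hsU, hwsum] at hineq
    have : (![9, 1, 1] : Fin 3 → ℝ) 0 = 9 := rfl
    rw [this] at hineq
    have hB1 : (B.card : ℝ) ≤ 1 := by exact_mod_cast hBcard
    linarith
end
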